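/- arXiv:1011.1685 — 4 statements merged into one kernel-verified Lean document; each statement's English description precedes it below -/
import Mathlib

section
/- (Multivariate two-component regular variation.) Let $Z_1,Z_2\in\mathbb{R}^d$ be $\alpha$-regularly varying random vectors with tail measures $\Lambda_1,\Lambda_2$ and the same slowly varying function $L_b$, bounded away from zero and infinity on compacts, and suppose $\lim_{t\to\infty}t^{\alpha}L_b(t)\,\mathbb{P}[|Z_1|>t,\ |Z_2|>t]=0$. Then the pair $(Z_1,Z_2)\in\mathbb{R}^{2d}$ is $\alpha$-regularly varying with tail measure $\Lambda$ given by $\langle F,\Lambda\rangle=\langle F(\cdot,0),\Lambda_1\rangle+\langle F(0,\cdot),\Lambda_2\rangle$, i.e. for every $F\in C_c((\mathbb{R}^d\times\mathbb{R}^d)\setminus\{0\})$, $\lim_{t\to\infty}t^{\alpha}L_b(t)\,\mathbb{E}[F(t^{-1}Z_1,t^{-1}Z_2)]=\langle F,\Lambda\rangle$. -/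
open MeasureTheory Filter Topology

noncomputable section

section cutoff

variable {E : Type*} [NormedAddCommGroup E]

def cutoff (ε M : ℝ) (x : E) : ℝ :=
  max 0 (min 1 (min ((‖x‖ - ε/2)*(2/ε)) ((2*M - ‖x‖)/M)))

lemma cutoff_cont (ε M : ℝ) : Continuous (cutoff (E := E) ε M) := by
  unfold cutoff; fun_prop

lemma cutoff_nonneg (ε M : ℝ) (x : E) : 0 ≤ cutoff ε M x := le_max_left _ _

lemma cutoff_le_one (ε M : ℝ) (x : E) : cutoff ε M x ≤ 1 :=
  max_le zero_le_one (min_le_left _ _)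

lemma cutoff_eq_one {ε M : ℝ} (hε : 0 < ε) (hM : 0 < M) {x : E}
    (h1 : ε ≤ ‖x‖) (h2 : ‖x‖ ≤ M) : cutoff ε M x = 1 := by
  unfold cutoff
  have e1 : (1:ℝ) ≤ (‖x‖ - ε/2)*(2/ε) := by
    have h : ε/2 ≤ ‖x‖ - ε/2 := by linarith
    calc (1:ℝ) = (ε/2) * (2/ε) := by field_simp
    _ ≤ (‖x‖ - ε/2)*(2/ε) := mul_le_mul_of_nonneg_right h (by positivity)
  have e2 : (1:ℝ) ≤ (2*M - ‖x‖)/M := by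
    rw [le_div_iff₀ hM]; linarith
  rw [min_eq_left (le_min e1 e2), max_eq_right zero_le_one]

lemma cutoff_eq_zero_small {ε M : ℝ} (hε : 0 < ε) {x : E}
    (h : ‖x‖ ≤ ε/2) : cutoff ε M x = 0 := by
  unfold cutoff
  have h1 : (‖x‖ - ε/2)*(2/ε) ≤ 0 :=
    mul_nonpos_of_nonpos_of_nonneg (by linarith) (by positivity)
  exact max_eq_left
    (le_trans (le_trans (min_le_right _ _) (min_le_left _ _)) h1)

lemma cutoff_eq_zero_big {ε M : ℝ} (hM : 0 < M) {x : E}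
    (h : 2*M ≤ ‖x‖) : cutoff ε M x = 0 := by
  unfold cutoff
  have h1 : (2*M - ‖x‖)/M ≤ 0 := div_nonpos_of_nonpos_of_nonneg (by linarith) hM.le
  exact max_eq_left
    (le_trans (le_trans (min_le_right _ _) (min_le_right _ _)) h1)

lemma pb_case {F : E × E → ℝ} {ε M η δ : ℝ}
    (hε : 0 < ε) (hM : 0 < M) (hδε : δ ≤ ε)
    (hFsmall : ∀ p : E × E, ‖p‖ ≤ 2*ε → F p = 0)
    (hFbig : ∀ p : E × E, M < ‖p‖ → F p = 0)
    (hUC : ∀ p q : E × E, dist p q ≤ δ → |F p - F q| ≤ η)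
    (hη : 0 ≤ η)
    (x y : E) (hy : ‖y‖ ≤ δ) :
    |F (x,y) - F (x,0) - F (0,y)| ≤ η * cutoff ε M x := by
  have hF0y : F (0,y) = 0 := by
    apply hFsmall
    rw [Prod.norm_def]
    simp only [norm_zero]
    exact max_le (by linarith) (by linarith)
  rcases le_or_gt ‖x‖ ε with hx | hx
  · have h1 : F (x,y) = 0 := by
      apply hFsmall; rw [Prod.norm_def]; exact max_le (by linarith) (by linarith)
    have h2 : F (x,0) = 0 := by
      apply hFsmall; rw [Prod.norm_def]; simp only [norm_zero]
      exact max_le (by linarith) (by linarith)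
    rw [h1, h2, hF0y]
    simpa using mul_nonneg hη (cutoff_nonneg ε M x)
  · rcases le_or_gt ‖x‖ M with hxM | hxM
    · rw [cutoff_eq_one hε hM hx.le hxM, mul_one, hF0y, sub_zero]
      apply hUC (x,y) (x,0)
      rw [Prod.dist_eq]
      simp only [dist_self, dist_zero_right]
      exact max_le ((norm_nonneg y).trans hy) hy
    · have h1 : F (x,y) = 0 := by
        apply hFbig; rw [Prod.norm_def]; exact lt_of_lt_of_le hxM (le_max_left _ _)
      have h2 : F (x,0) = 0 := by
        apply hFbig; rw [Prod.norm_def]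
        exact lt_of_lt_of_le hxM (le_max_left _ _)
      rw [h1, h2, hF0y]
      simpa using mul_nonneg hη (cutoff_nonneg ε M x)

lemma pointwise_bound {F : E × E → ℝ} {ε M C η δ : ℝ}
    (hε : 0 < ε) (hM : 0 < M) (hδε : δ ≤ ε)
    (hFsmall : ∀ p : E × E, ‖p‖ ≤ 2*ε → F p = 0)
    (hFbig : ∀ p : E × E, M < ‖p‖ → F p = 0)
    (hC : ∀ p, |F p| ≤ C)
    (hUC : ∀ p q : E × E, dist p q ≤ δ → |F p - F q| ≤ η)
    (hη : 0 ≤ η)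
    (x y : E) :
    |F (x,y) - F (x,0) - F (0,y)| ≤
      η * cutoff ε M x + η * cutoff ε M y + (if δ < ‖x‖ ∧ δ < ‖y‖ then 3*C else 0) := by
  have n1 := mul_nonneg hη (cutoff_nonneg ε M x)
  have n2 := mul_nonneg hη (cutoff_nonneg ε M y)
  by_cases hxy : δ < ‖x‖ ∧ δ < ‖y‖
  · rw [if_pos hxy]
    have c1 := hC (x,y); have c2 := hC (x,0); have c3 := hC (0,y)
    have habs : |F (x,y) - F (x,0) - F (0,y)| ≤ |F (x,y)| + |F (x,0)| + |F (0,y)| := by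
      rw [abs_le]
      constructor <;>
        [skip; skip] <;>
        linarith [neg_abs_le (F (x,y)), le_abs_self (F (x,y)),
          neg_abs_le (F (x,0)), le_abs_self (F (x,0)),
          neg_abs_le (F (0,y)), le_abs_self (F (0,y))]
    linarith
  · rw [if_neg hxy]; push_neg at hxy
    rcases le_or_gt ‖y‖ δ with hy | hy
    · have h := pb_case hε hM hδε hFsmall hFbig hUC hη x y hy
      linarith
    · have hx : ‖x‖ ≤ δ := le_of_not_gt fun h => absurd (hxy h) (not_le.mpr hy)
      have hFsmall' : ∀ p : E × E, ‖p‖ ≤ 2*ε → F (p.2, p.1) = 0 := by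
        intro p hp
        apply hFsmall
        rw [Prod.norm_def] at hp ⊢
        simpa [max_comm] using hp
      have hFbig' : ∀ p : E × E, M < ‖p‖ → F (p.2, p.1) = 0 := by
        intro p hp
        apply hFbig
        rw [Prod.norm_def] at hp ⊢
        simpa [max_comm] using hp
      have hUC' : ∀ p q : E × E, dist p q ≤ δ → |F (p.2, p.1) - F (q.2, q.1)| ≤ η := by
        intro p q hpq
        apply hUC
        rw [Prod.dist_eq] at hpq ⊢
        simpa [max_comm] using hpq
      have h := pb_case (F := fun p : E × E => F (p.2, p.1)) hε hM hδε hFsmall'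
        hFbig' hUC' hη y x hx
      simp only at h
      have heq : F (x,y) - F (x,0) - F (0,y) = F (x,y) - F (0,y) - F (x,0) := by ring
      rw [heq]
      linarith
end cutoff

lemma aux_int {Ω E : Type*} [MeasurableSpace Ω] [MeasurableSpace E] [TopologicalSpace E]
    [OpensMeasurableSpace E] (P : Measure Ω) [IsProbabilityMeasure P]
    {f : E → ℝ} {C : ℝ} (hf : Continuous f) (hC : ∀ x, |f x| ≤ C)
    {Z : Ω → E} (hZ : Measurable Z) : Integrable (fun ω => f (Z ω)) P :=
  (integrable_const C).mono' ((hf.measurable.comp hZ).aestronglyMeasurable)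
    (Filter.Eventually.of_forall fun ω => by simpa [Real.norm_eq_abs] using hC (Z ω))

/-- two-component regular variation: if `Z₁, Z₂` are
`α`-regularly varying with tail measures `Λ₁, Λ₂` (same slowly varying `L_b`,
bounded away from `0,∞` on compacts) and asymptotically tail independent, then
the pair `(Z₁,Z₂)` is `α`-regularly varying with tail measure
`⟨F,Λ⟩ = ⟨F(·,0),Λ₁⟩ + ⟨F(0,·),Λ₂⟩`. -/
theorem pair_regular_variation
    {Ω : Type*} [MeasurableSpace Ω] {d : ℕ}
    (P : Measure Ω) [IsProbabilityMeasure P]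
    (Z1 Z2 : Ω → EuclideanSpace ℝ (Fin d))
    (hZ1 : Measurable Z1) (hZ2 : Measurable Z2)
    (α : ℝ) (hα : 0 < α)
    (L : ℝ → ℝ)
    (hLslow : ∀ l : ℝ, 0 < l →
      Tendsto (fun t => L (l * t) / L t) atTop (𝓝 1))
    (hLbdd : ∀ a b : ℝ, 0 < a →
      ∃ m M : ℝ, 0 < m ∧ ∀ t ∈ Set.Icc a b, m ≤ L t ∧ L t ≤ M)
    (Λ1 Λ2 : Measure (EuclideanSpace ℝ (Fin d)))
    (hconv1 : ∀ f : EuclideanSpace ℝ (Fin d) → ℝ, Continuous f →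
      HasCompactSupport f → (0 : EuclideanSpace ℝ (Fin d)) ∉ tsupport f →
      Tendsto (fun t : ℝ => t ^ α * L t * ∫ ω, f (t⁻¹ • Z1 ω) ∂P) atTop
        (𝓝 (∫ x, f x ∂Λ1)))
    (hconv2 : ∀ f : EuclideanSpace ℝ (Fin d) → ℝ, Continuous f →
      HasCompactSupport f → (0 : EuclideanSpace ℝ (Fin d)) ∉ tsupport f →
      Tendsto (fun t : ℝ => t ^ α * L t * ∫ ω, f (t⁻¹ • Z2 ω) ∂P) atTop
        (𝓝 (∫ x, f x ∂Λ2)))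
    (htailindep : Tendsto
      (fun t : ℝ => t ^ α * L t * (P {ω | t < ‖Z1 ω‖ ∧ t < ‖Z2 ω‖}).toReal)
      atTop (𝓝 0)) :
    ∀ F : EuclideanSpace ℝ (Fin d) × EuclideanSpace ℝ (Fin d) → ℝ,
      Continuous F → HasCompactSupport F →
      (0 : EuclideanSpace ℝ (Fin d) × EuclideanSpace ℝ (Fin d)) ∉ tsupport F →
      Tendsto (fun t : ℝ => t ^ α * L t * ∫ ω, F (t⁻¹ • Z1 ω, t⁻¹ • Z2 ω) ∂P)
        atTop (𝓝 ((∫ x, F (x, 0) ∂Λ1) + ∫ x, F (0, x) ∂Λ2)) := by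
  intro F hFc hFcs hF0
  have hLpos : ∀ t : ℝ, 0 < t → 0 < L t := by
    intro t ht
    obtain ⟨m, Mb, hm, h⟩ := hLbdd t t ht
    exact lt_of_lt_of_le hm (h t ⟨le_refl t, le_refl t⟩).1
  obtain ⟨r, hr, hrF⟩ := Metric.mem_nhds_iff.mp
    ((isClosed_tsupport F).isOpen_compl.mem_nhds hF0)
  set ε : ℝ := r/4 with hεdef
  have hε : 0 < ε := by positivity
  have hFsmall : ∀ p : EuclideanSpace ℝ (Fin d) × EuclideanSpace ℝ (Fin d),
      ‖p‖ ≤ 2*ε → F p = 0 := by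
    intro p hp
    apply image_eq_zero_of_notMem_tsupport
    have hp' : p ∈ Metric.ball (0 : EuclideanSpace ℝ (Fin d) × EuclideanSpace ℝ (Fin d)) r := by
      rw [Metric.mem_ball, dist_zero_right]
      calc ‖p‖ ≤ 2*ε := hp
      _ < r := by rw [hεdef]; linarith
    exact hrF hp'
  obtain ⟨M0, hM0⟩ := hFcs.isBounded.subset_closedBall 0
  set M : ℝ := max M0 ε with hMdef
  have hM : 0 < M := lt_of_lt_of_le hε (le_max_right _ _)
  have hFbig : ∀ p : EuclideanSpace ℝ (Fin d) × EuclideanSpace ℝ (Fin d),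
      M < ‖p‖ → F p = 0 := by
    intro p hp
    apply image_eq_zero_of_notMem_tsupport
    intro hmem
    have h1 := hM0 hmem
    rw [Metric.mem_closedBall, dist_zero_right] at h1
    have : ‖p‖ ≤ M := le_trans h1 (le_max_left _ _)
    linarith
  obtain ⟨C, hC⟩ := hFcs.exists_bound_of_continuous hFc
  have hC' : ∀ p, |F p| ≤ C := fun p => by simpa [Real.norm_eq_abs] using hC p
  have hC0 : 0 ≤ C := le_trans (abs_nonneg _) (hC' 0)
  have hUCF : UniformContinuous F := hFcs.uniformContinuous_of_continuous hFc
  have hg1c : Continuous fun x : EuclideanSpace ℝ (Fin d) => F (x, 0) :=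
    hFc.comp (continuous_id.prodMk continuous_const)
  have hg2c : Continuous fun x : EuclideanSpace ℝ (Fin d) => F (0, x) :=
    hFc.comp (continuous_const.prodMk continuous_id)
  have hg1cs : HasCompactSupport fun x : EuclideanSpace ℝ (Fin d) => F (x, 0) := by
    apply HasCompactSupport.intro (isCompact_closedBall (0 : EuclideanSpace ℝ (Fin d)) M)
    intro x hx
    apply hFbig
    rw [Prod.norm_def]
    rw [Metric.mem_closedBall, dist_zero_right, not_le] at hx
    simp only [norm_zero]
    exact lt_of_lt_of_le hx (le_max_left _ _)
  have hg2cs : HasCompactSupport fun x : EuclideanSpace ℝ (Fin d) => F (0, x) := by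
    apply HasCompactSupport.intro (isCompact_closedBall (0 : EuclideanSpace ℝ (Fin d)) M)
    intro x hx
    apply hFbig
    rw [Prod.norm_def]
    rw [Metric.mem_closedBall, dist_zero_right, not_le] at hx
    simp only [norm_zero]
    exact lt_of_lt_of_le hx (le_max_right _ _)
  have hg1n0 : (0:EuclideanSpace ℝ (Fin d)) ∉ tsupport fun x => F (x, 0) := by
    rw [notMem_tsupport_iff_eventuallyEq]
    filter_upwards [Metric.ball_mem_nhds (0 : EuclideanSpace ℝ (Fin d)) hε] with x hx
    apply hFsmall
    rw [Prod.norm_def]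
    simp only [norm_zero]
    rw [Metric.mem_ball, dist_zero_right] at hx
    exact max_le (by linarith) (by linarith)
  have hg2n0 : (0:EuclideanSpace ℝ (Fin d)) ∉ tsupport fun x => F (0, x) := by
    rw [notMem_tsupport_iff_eventuallyEq]
    filter_upwards [Metric.ball_mem_nhds (0 : EuclideanSpace ℝ (Fin d)) hε] with x hx
    apply hFsmall
    rw [Prod.norm_def]
    simp only [norm_zero]
    rw [Metric.mem_ball, dist_zero_right] at hx
    exact max_le (by linarith) (by linarith)
  have T1 : Tendsto (fun t : ℝ => t ^ α * L t * ∫ ω, F (t⁻¹ • Z1 ω, 0) ∂P) atTop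
      (𝓝 (∫ x, F (x, 0) ∂Λ1)) := hconv1 _ hg1c hg1cs hg1n0
  have T2 : Tendsto (fun t : ℝ => t ^ α * L t * ∫ ω, F (0, t⁻¹ • Z2 ω) ∂P) atTop
      (𝓝 (∫ x, F (0, x) ∂Λ2)) := hconv2 _ hg2c hg2cs hg2n0
  have hmain : Tendsto (fun t : ℝ => t ^ α * L t *
      ((∫ ω, F (t⁻¹ • Z1 ω, t⁻¹ • Z2 ω) ∂P) - (∫ ω, F (t⁻¹ • Z1 ω, 0) ∂P)
        - (∫ ω, F (0, t⁻¹ • Z2 ω) ∂P))) atTop (𝓝 0) := by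
    rw [NormedAddCommGroup.tendsto_nhds_zero]
    intro η' hη'
    set K1 : ℝ := ∫ x, cutoff ε M x ∂Λ1 with hK1def
    set K2 : ℝ := ∫ x, cutoff ε M x ∂Λ2 with hK2def
    have hK1nn : 0 ≤ K1 := integral_nonneg (cutoff_nonneg ε M)
    have hK2nn : 0 ≤ K2 := integral_nonneg (cutoff_nonneg ε M)
    have hφcs : HasCompactSupport (cutoff (E := EuclideanSpace ℝ (Fin d)) ε M) := by
      apply HasCompactSupport.intro
        (isCompact_closedBall (0 : EuclideanSpace ℝ (Fin d)) (2*M))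
      intro x hx
      rw [Metric.mem_closedBall, dist_zero_right, not_le] at hx
      exact cutoff_eq_zero_big hM hx.le
    have hφn0 : (0:EuclideanSpace ℝ (Fin d)) ∉ tsupport (cutoff ε M) := by
      rw [notMem_tsupport_iff_eventuallyEq]
      filter_upwards [Metric.ball_mem_nhds (0 : EuclideanSpace ℝ (Fin d))
        (by positivity : (0:ℝ) < ε/2)] with x hx
      rw [Metric.mem_ball, dist_zero_right] at hx
      exact cutoff_eq_zero_small hε hx.le
    have hA1 := hconv1 _ (cutoff_cont ε M) hφcs hφn0
    have hA2 := hconv2 _ (cutoff_cont ε M) hφcs hφn0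
    set η : ℝ := η' / (2*(K1+K2+2)) with hηdef
    have hden : (0:ℝ) < 2*(K1+K2+2) := by linarith
    have hηpos : 0 < η := div_pos hη' hden
    obtain ⟨δ0, hδ0, hδ0'⟩ := Metric.uniformContinuous_iff.mp hUCF η hηpos
    set δ : ℝ := min (δ0/2) ε with hδdef
    have hδpos : 0 < δ := lt_min (by linarith) hε
    have hδε : δ ≤ ε := min_le_right _ _
    have hUC : ∀ p q : EuclideanSpace ℝ (Fin d) × EuclideanSpace ℝ (Fin d),
        dist p q ≤ δ → |F p - F q| ≤ η := by
      intro p q h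
      have h2 : dist p q < δ0 :=
        lt_of_le_of_lt h (lt_of_le_of_lt (min_le_left _ _) (by linarith))
      have h3 := hδ0' h2
      rw [Real.dist_eq] at h3
      exact h3.le
    have hcomp : Tendsto (fun t : ℝ => δ * t) atTop atTop :=
      Tendsto.const_mul_atTop hδpos tendsto_id
    have h2 := htailindep.comp hcomp
    have h1 := (hLslow δ⁻¹ (inv_pos.mpr hδpos)).comp hcomp
    have h1' : Tendsto (fun t : ℝ => L t / L (δ*t)) atTop (𝓝 1) := by
      apply h1.congr
      intro t
      simp only [Function.comp_apply]
      rw [inv_mul_cancel_left₀ hδpos.ne']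
    have hBt : Tendsto (fun t : ℝ => t ^ α * L t *
        (P {ω | δ*t < ‖Z1 ω‖ ∧ δ*t < ‖Z2 ω‖}).toReal) atTop (𝓝 0) := by
      have hprod := (h1'.const_mul (δ ^ (-α))).mul h2
      simp only [mul_one, mul_zero] at hprod
      apply hprod.congr'
      filter_upwards [eventually_gt_atTop (0:ℝ)] with t ht
      have hLδt : 0 < L (δ*t) := hLpos _ (by positivity)
      have hδα : δ ^ (-α) * δ ^ α = 1 := by
        rw [← Real.rpow_add hδpos]; simp
      simp only [Function.comp_apply]
      calc δ ^ (-α) * (L t / L (δ*t)) *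
            ((δ*t) ^ α * L (δ*t) * (P {ω | δ*t < ‖Z1 ω‖ ∧ δ*t < ‖Z2 ω‖}).toReal)
          = δ ^ (-α) * (L t / L (δ*t)) *
            ((δ ^ α * t ^ α) * L (δ*t) * (P {ω | δ*t < ‖Z1 ω‖ ∧ δ*t < ‖Z2 ω‖}).toReal) := by
            rw [Real.mul_rpow hδpos.le ht.le]
        _ = (δ ^ (-α) * δ ^ α) * t ^ α * ((L t / L (δ*t)) * L (δ*t)) *
            (P {ω | δ*t < ‖Z1 ω‖ ∧ δ*t < ‖Z2 ω‖}).toReal := by ring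
        _ = t ^ α * L t * (P {ω | δ*t < ‖Z1 ω‖ ∧ δ*t < ‖Z2 ω‖}).toReal := by
            rw [hδα, div_mul_cancel₀ _ hLδt.ne']; ring
    have hA1ev := hA1.eventually_lt_const (by linarith : K1 < K1 + 1)
    have hA2ev := hA2.eventually_lt_const (by linarith : K2 < K2 + 1)
    have hB3 := hBt.const_mul (3*C)
    rw [mul_zero] at hB3
    have hBev := Metric.tendsto_nhds.mp hB3 (η'/2) (by linarith)
    filter_upwards [hA1ev, hA2ev, hBev, eventually_gt_atTop (0:ℝ)] with t hA1t hA2t hBt' ht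
    have htL : 0 < t ^ α * L t := mul_pos (Real.rpow_pos_of_pos ht α) (hLpos t ht)
    have hmeaspair : Measurable fun ω => (t⁻¹ • Z1 ω, t⁻¹ • Z2 ω) :=
      (hZ1.const_smul t⁻¹).prodMk (hZ2.const_smul t⁻¹)
    have hiF : Integrable (fun ω => F (t⁻¹ • Z1 ω, t⁻¹ • Z2 ω)) P :=
      aux_int P hFc hC' hmeaspair
    have hig1 : Integrable (fun ω => F (t⁻¹ • Z1 ω, 0)) P :=
      aux_int P hg1c (fun x => hC' (x,0)) (hZ1.const_smul t⁻¹)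
    have hig2 : Integrable (fun ω => F (0, t⁻¹ • Z2 ω)) P :=
      aux_int P hg2c (fun x => hC' (0,x)) (hZ2.const_smul t⁻¹)
    have hcub : ∀ x : EuclideanSpace ℝ (Fin d), |cutoff ε M x| ≤ 1 := fun x => by
      rw [abs_of_nonneg (cutoff_nonneg ε M x)]; exact cutoff_le_one ε M x
    have hiφ1 : Integrable (fun ω => cutoff ε M (t⁻¹ • Z1 ω)) P :=
      aux_int P (cutoff_cont ε M) hcub (hZ1.const_smul t⁻¹)
    have hiφ2 : Integrable (fun ω => cutoff ε M (t⁻¹ • Z2 ω)) P :=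
      aux_int P (cutoff_cont ε M) hcub (hZ2.const_smul t⁻¹)
    set Et : Set Ω := {ω | δ*t < ‖Z1 ω‖ ∧ δ*t < ‖Z2 ω‖} with hEtdef
    have hEtmeas : MeasurableSet Et :=
      (measurableSet_lt measurable_const hZ1.norm).inter
        (measurableSet_lt measurable_const hZ2.norm)
    have hiInd : Integrable (Et.indicator fun _ => 3*C) P :=
      (integrable_const (3*C)).indicator hEtmeas
    have hpt : ∀ ω, |F (t⁻¹ • Z1 ω, t⁻¹ • Z2 ω) - F (t⁻¹ • Z1 ω, 0) - F (0, t⁻¹ • Z2 ω)|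
        ≤ η * cutoff ε M (t⁻¹ • Z1 ω) + η * cutoff ε M (t⁻¹ • Z2 ω)
          + Et.indicator (fun _ => 3*C) ω := by
      intro ω
      have h := pointwise_bound hε hM hδε hFsmall hFbig hC' hUC hηpos.le
        (t⁻¹ • Z1 ω) (t⁻¹ • Z2 ω)
      have hnorm : ∀ z : EuclideanSpace ℝ (Fin d), (δ < ‖t⁻¹ • z‖) ↔ δ*t < ‖z‖ := by
        intro z
        rw [norm_smul, Real.norm_eq_abs, abs_of_pos (inv_pos.mpr ht),
          inv_mul_eq_div, lt_div_iff₀ ht]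
      rw [Set.indicator_apply]
      have hcond : (δ < ‖t⁻¹ • Z1 ω‖ ∧ δ < ‖t⁻¹ • Z2 ω‖) ↔ ω ∈ Et := by
        rw [hEtdef]
        simp only [Set.mem_setOf_eq]
        rw [hnorm (Z1 ω), hnorm (Z2 ω)]
      rwa [if_congr hcond rfl rfl] at h
    have hint : |(∫ ω, F (t⁻¹ • Z1 ω, t⁻¹ • Z2 ω) ∂P) - (∫ ω, F (t⁻¹ • Z1 ω, 0) ∂P)
        - (∫ ω, F (0, t⁻¹ • Z2 ω) ∂P)|
        ≤ η * (∫ ω, cutoff ε M (t⁻¹ • Z1 ω) ∂P) + η * (∫ ω, cutoff ε M (t⁻¹ • Z2 ω) ∂P)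
          + 3*C*(P Et).toReal := by
      have hiFg1 : Integrable (fun ω => F (t⁻¹ • Z1 ω, t⁻¹ • Z2 ω)
          - F (t⁻¹ • Z1 ω, 0)) P := hiF.sub hig1
      have hiall : Integrable (fun ω => F (t⁻¹ • Z1 ω, t⁻¹ • Z2 ω)
          - F (t⁻¹ • Z1 ω, 0) - F (0, t⁻¹ • Z2 ω)) P := hiFg1.sub hig2
      have hsplit : (∫ ω, (F (t⁻¹ • Z1 ω, t⁻¹ • Z2 ω) - F (t⁻¹ • Z1 ω, 0)
            - F (0, t⁻¹ • Z2 ω)) ∂P)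
          = (∫ ω, F (t⁻¹ • Z1 ω, t⁻¹ • Z2 ω) ∂P) - (∫ ω, F (t⁻¹ • Z1 ω, 0) ∂P)
            - (∫ ω, F (0, t⁻¹ • Z2 ω) ∂P) := by
        rw [integral_sub hiFg1 hig2, integral_sub hiF hig1]
      rw [← hsplit]
      have habs : |∫ ω, (F (t⁻¹ • Z1 ω, t⁻¹ • Z2 ω) - F (t⁻¹ • Z1 ω, 0)
          - F (0, t⁻¹ • Z2 ω)) ∂P| ≤ ∫ ω, |F (t⁻¹ • Z1 ω, t⁻¹ • Z2 ω)
          - F (t⁻¹ • Z1 ω, 0) - F (0, t⁻¹ • Z2 ω)| ∂P := by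
        simpa [Real.norm_eq_abs] using norm_integral_le_integral_norm (μ := P)
          (fun ω => F (t⁻¹ • Z1 ω, t⁻¹ • Z2 ω) - F (t⁻¹ • Z1 ω, 0) - F (0, t⁻¹ • Z2 ω))
      refine le_trans habs ?_
      have hibound : Integrable (fun ω => η * cutoff ε M (t⁻¹ • Z1 ω)
          + η * cutoff ε M (t⁻¹ • Z2 ω) + Et.indicator (fun _ => 3*C) ω) P :=
        ((hiφ1.const_mul η).add (hiφ2.const_mul η)).add hiInd
      have hmono := integral_mono hiall.abs hibound hpt
      refine le_trans hmono ?_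
      have hi12 : Integrable (fun ω => η * cutoff ε M (t⁻¹ • Z1 ω)
          + η * cutoff ε M (t⁻¹ • Z2 ω)) P := (hiφ1.const_mul η).add (hiφ2.const_mul η)
      rw [integral_add hi12 hiInd,
        integral_add (hiφ1.const_mul η) (hiφ2.const_mul η),
        integral_const_mul, integral_const_mul, integral_indicator_const _ hEtmeas]
      apply le_of_eq
      simp only [smul_eq_mul, measureReal_def]
      ring
    rw [Real.norm_eq_abs, abs_mul, abs_of_pos htL]
    have e1 : t ^ α * L t * |(∫ ω, F (t⁻¹ • Z1 ω, t⁻¹ • Z2 ω) ∂P)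
        - (∫ ω, F (t⁻¹ • Z1 ω, 0) ∂P) - (∫ ω, F (0, t⁻¹ • Z2 ω) ∂P)|
        ≤ t ^ α * L t * (η * (∫ ω, cutoff ε M (t⁻¹ • Z1 ω) ∂P)
          + η * (∫ ω, cutoff ε M (t⁻¹ • Z2 ω) ∂P) + 3*C*(P Et).toReal) :=
      mul_le_mul_of_nonneg_left hint htL.le
    have e3 : η * (t ^ α * L t * ∫ ω, cutoff ε M (t⁻¹ • Z1 ω) ∂P) ≤ η * (K1+1) :=
      mul_le_mul_of_nonneg_left hA1t.le hηpos.le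
    have e4 : η * (t ^ α * L t * ∫ ω, cutoff ε M (t⁻¹ • Z2 ω) ∂P) ≤ η * (K2+1) :=
      mul_le_mul_of_nonneg_left hA2t.le hηpos.le
    have e5 : 3*C*(t ^ α * L t * (P Et).toReal) < η'/2 := by
      rw [Real.dist_0_eq_abs] at hBt'
      exact lt_of_le_of_lt (le_abs_self _) hBt'
    have e6 : η * (K1+1) + η * (K2+1) = η'/2 := by
      rw [hηdef]; field_simp; ring
    have e2 : t ^ α * L t * (η * (∫ ω, cutoff ε M (t⁻¹ • Z1 ω) ∂P)
          + η * (∫ ω, cutoff ε M (t⁻¹ • Z2 ω) ∂P) + 3*C*(P Et).toReal)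
        = η * (t ^ α * L t * ∫ ω, cutoff ε M (t⁻¹ • Z1 ω) ∂P)
          + η * (t ^ α * L t * ∫ ω, cutoff ε M (t⁻¹ • Z2 ω) ∂P)
          + 3*C*(t ^ α * L t * (P Et).toReal) := by ring
    rw [e2] at e1
    linarith
  have hsum := (T1.add T2).add hmain
  have heq : (fun t : ℝ => t ^ α * L t * ∫ ω, F (t⁻¹ • Z1 ω, t⁻¹ • Z2 ω) ∂P)
      = fun t : ℝ => (t ^ α * L t * ∫ ω, F (t⁻¹ • Z1 ω, 0) ∂P)
        + (t ^ α * L t * ∫ ω, F (0, t⁻¹ • Z2 ω) ∂P)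
        + (t ^ α * L t * ((∫ ω, F (t⁻¹ • Z1 ω, t⁻¹ • Z2 ω) ∂P)
          - (∫ ω, F (t⁻¹ • Z1 ω, 0) ∂P) - (∫ ω, F (0, t⁻¹ • Z2 ω) ∂P))) := by
    funext t; ring
  rw [heq]
  simpa using hsum
end
end

section
/- (Multivariate Breiman lemma.) Let $X\in\mathbb{R}^d$ be $\alpha$-regularly varying with tail measure $\Lambda$ and slowly varying function $L_b$ bounded away from zero and infinity on compacts, and let $A$ be a random $d\times d$ matrix independent of $X$ with $\mathbb{E}\|A\|^{\beta}<\infty$ for some $\beta>\alpha$. Then $AX$ is $\alpha$-regularly varying with tail measure $\widetilde\Lambda$ given by $\langle f,\widetilde\Lambda\rangle=\mathbb{E}[\langle f\circ A,\Lambda\rangle]$ for all $f\in C_c(\mathbb{R}^d\setminus\{0\})$. -/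
open MeasureTheory ProbabilityTheory Filter Topology

noncomputable section

set_option maxHeartbeats 2000000
set_option synthInstance.maxHeartbeats 400000



section Lfacts
variable {L : ℝ → ℝ}

lemma brei_Lpos (hLbdd : ∀ a b : ℝ, 0 < a →
      ∃ m M : ℝ, 0 < m ∧ ∀ t ∈ Set.Icc a b, m ≤ L t ∧ L t ≤ M) :
    ∀ t : ℝ, 0 < t → 0 < L t := by
  intro t ht
  obtain ⟨m, M, hm, h⟩ := hLbdd t t ht
  exact lt_of_lt_of_le hm (h t (by simp)).1

lemma brei_Lratio
    (hL2 : Tendsto (fun t => L (2 * t) / L t) atTop (𝓝 1))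
    (hpos : ∀ t : ℝ, 0 < t → 0 < L t) {ε : ℝ} (hε : 0 < ε) :
    ∃ T : ℝ, 1 ≤ T ∧ ∀ t, T ≤ t → (1 - ε) * L t ≤ L (2 * t) ∧ L (2 * t) ≤ (1 + ε) * L t := by
  have h := hL2 (Icc_mem_nhds (by linarith) (by linarith) : Set.Icc (1-ε) (1+ε) ∈ 𝓝 (1:ℝ))
  rw [mem_map, mem_atTop_sets] at h
  obtain ⟨T₀, hT₀⟩ := h
  refine ⟨max T₀ 1, le_max_right _ _, fun t ht => ?_⟩
  have ht1 : (1:ℝ) ≤ t := le_trans (le_max_right _ _) ht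
  have htpos : 0 < t := by linarith
  have hLt : 0 < L t := hpos t htpos
  have := hT₀ t (le_trans (le_max_left _ _) ht)
  simp only [Set.mem_preimage, Set.mem_Icc] at this
  constructor
  · have := this.1
    calc (1 - ε) * L t ≤ (L (2*t) / L t) * L t := by
          apply mul_le_mul_of_nonneg_right this hLt.le
    _ = L (2*t) := by field_simp
  · have := this.2
    calc L (2*t) = (L (2*t) / L t) * L t := by field_simp
    _ ≤ (1 + ε) * L t := mul_le_mul_of_nonneg_right this hLt.le

lemma brei_Lchain {ε T : ℝ}
    (h : ∀ t, T ≤ t → (1 - ε) * L t ≤ L (2 * t) ∧ L (2 * t) ≤ (1 + ε) * L t)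
    (hT : 1 ≤ T) (hε : 0 < ε) (hε1 : ε < 1) :
    ∀ (k : ℕ) (t : ℝ), T ≤ t →
      (1 - ε)^k * L t ≤ L (2^k * t) ∧ L (2^k * t) ≤ (1 + ε)^k * L t := by
  intro k
  induction k with
  | zero => intro t ht; simp
  | succ k ih =>
    intro t ht
    have htpos : 0 < t := lt_of_lt_of_le (by linarith) ht
    have h2k : T ≤ 2^k * t := le_trans ht (le_mul_of_one_le_left htpos.le (one_le_pow₀ (by norm_num)))
    have hstep := h _ h2k
    have hrw : 2 * (2^k * t) = 2^(k+1) * t := by ring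
    rw [hrw] at hstep
    obtain ⟨ih1, ih2⟩ := ih t ht
    constructor
    · calc (1-ε)^(k+1) * L t = (1-ε) * ((1-ε)^k * L t) := by ring
      _ ≤ (1-ε) * L (2^k * t) := by
          apply mul_le_mul_of_nonneg_left ih1 (by linarith)
      _ ≤ L (2^(k+1) * t) := hstep.1
    · calc L (2^(k+1)*t) ≤ (1+ε) * L (2^k * t) := hstep.2
      _ ≤ (1+ε) * ((1+ε)^k * L t) := mul_le_mul_of_nonneg_left ih2 (by linarith)
      _ = (1+ε)^(k+1) * L t := by ring

/-- growth bound: `L t ≤ C * t ^ c` eventually, for any `c > 0`. -/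
lemma brei_Lgrowth
    (hL2 : Tendsto (fun t => L (2 * t) / L t) atTop (𝓝 1))
    (hLbdd : ∀ a b : ℝ, 0 < a →
      ∃ m M : ℝ, 0 < m ∧ ∀ t ∈ Set.Icc a b, m ≤ L t ∧ L t ≤ M)
    {c : ℝ} (hc : 0 < c) :
    ∃ C T : ℝ, 0 < C ∧ 1 ≤ T ∧ ∀ t, T ≤ t → L t ≤ C * t ^ c := by
  have hpos := brei_Lpos hLbdd
  set ε : ℝ := min (1/2) ((2:ℝ)^c - 1) with hεdef
  have h2c : 1 < (2:ℝ)^c := Real.one_lt_rpow_iff_of_pos (by norm_num) |>.2 (by norm_num; exact hc)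
  have hε : 0 < ε := lt_min (by norm_num) (by linarith)
  have hε2 : 1 + ε ≤ (2:ℝ)^c := by
    have : ε ≤ (2:ℝ)^c - 1 := min_le_right _ _
    linarith
  obtain ⟨T, hT1, hT⟩ := brei_Lratio hL2 hpos hε
  obtain ⟨m, M, hm, hbdd⟩ := hLbdd T (2*T) (by linarith)
  have hMpos : 0 < M := lt_of_lt_of_le hm (le_trans (hbdd T (by constructor <;> linarith)).1
    (hbdd T (by constructor <;> linarith)).2)
  -- claim by induction: ∀ n, ∀ t ∈ [T, 2^n * (2T)], L t ≤ M * (1+ε)^n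
  have claim : ∀ n : ℕ, ∀ t, T ≤ t → t ≤ 2^n * (2*T) → L t ≤ M * (1+ε)^n := by
    intro n
    induction n with
    | zero => intro t ht ht2; simpa using (hbdd t ⟨ht, by linarith [ht2]⟩).2
    | succ n ih =>
      intro t ht ht2
      by_cases hcase : t ≤ 2^n * (2*T)
      · calc L t ≤ M * (1+ε)^n := ih t ht hcase
        _ ≤ M * (1+ε)^(n+1) := by
            apply mul_le_mul_of_nonneg_left _ hMpos.le
            exact pow_le_pow_right₀ (by linarith) (Nat.le_succ n)
      · push_neg at hcase
        have h2T : 2*T ≤ t := le_trans (le_mul_of_one_le_left (by linarith) (one_le_pow₀ (by norm_num))) hcase.le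
        have hT2 : T ≤ t/2 := by linarith
        have ht22 : t/2 ≤ 2^n * (2*T) := by
          have : t ≤ 2^(n+1) * (2*T) := ht2
          rw [pow_succ] at this; linarith
        have := (hT (t/2) hT2).2
        rw [show 2 * (t/2) = t by ring] at this
        calc L t ≤ (1+ε) * L (t/2) := this
        _ ≤ (1+ε) * (M * (1+ε)^n) := by
            apply mul_le_mul_of_nonneg_left (ih _ hT2 ht22) (by linarith)
        _ = M * (1+ε)^(n+1) := by ring
  refine ⟨M * 2^c, T, by positivity, hT1, fun t ht => ?_⟩
  have htpos : (0:ℝ) < t := by linarith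
  have hr : 1 ≤ t / T := (one_le_div (by linarith)).2 ht
  obtain ⟨k, hk1, hk2⟩ := exists_nat_pow_near hr (by norm_num : (1:ℝ) < 2)
  have ht2 : t ≤ 2^k * (2*T) := by
    have := hk2
    rw [div_lt_iff₀ (by linarith)] at this
    calc t ≤ 2^(k+1) * T := this.le
    _ = 2^k * (2*T) := by ring
  have hLle : L t ≤ M * (1+ε)^k := claim k t ht ht2
  have hpow : ((1:ℝ)+ε)^k ≤ (t/T)^c := by
    calc ((1:ℝ)+ε)^k ≤ ((2:ℝ)^c)^k := pow_le_pow_left₀ (by linarith) hε2 k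
    _ = ((2:ℝ)^(k:ℕ))^c := by
        rw [← Real.rpow_natCast ((2:ℝ)^c) k, ← Real.rpow_natCast (2:ℝ) k,
          ← Real.rpow_mul (by norm_num), ← Real.rpow_mul (by norm_num), mul_comm]
    _ ≤ (t/T)^c := Real.rpow_le_rpow (by positivity) hk1 hc.le
  have hdiv : (t/T)^c ≤ t^c := by
    apply Real.rpow_le_rpow (by positivity) _ hc.le
    calc t/T ≤ t/1 := by apply div_le_div_of_nonneg_left htpos.le one_pos; exact hT1
    _ = t := div_one t
  have h2cpos : (0:ℝ) ≤ (2:ℝ)^c - 1 := by linarith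
  calc L t ≤ M * (1+ε)^k := hLle
  _ ≤ M * (t/T)^c := mul_le_mul_of_nonneg_left hpow hMpos.le
  _ ≤ M * t^c := mul_le_mul_of_nonneg_left hdiv hMpos.le
  _ ≤ M * 2^c * t^c := by nlinarith [mul_nonneg (mul_nonneg hMpos.le (Real.rpow_nonneg htpos.le c)) h2cpos]

end Lfacts



section Bump
variable {E : Type*} [NormedAddCommGroup E] [NormedSpace ℝ E] [ProperSpace E]

/-- radial bump: 1 on the annulus `r₂ ≤ ‖x‖ ≤ r₃`, supported in `r₁ ≤ ‖x‖ ≤ r₄`. -/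
lemma brei_bump (r₁ r₂ r₃ r₄ : ℝ) (h1 : 0 < r₁) (h12 : r₁ < r₂) (h23 : r₂ ≤ r₃)
    (h34 : r₃ < r₄) :
    ∃ g : E → ℝ, Continuous g ∧ HasCompactSupport g ∧ (0 : E) ∉ tsupport g ∧
      (∀ x, 0 ≤ g x) ∧ (∀ x, g x ≤ 1) ∧
      (∀ x : E, r₂ ≤ ‖x‖ → ‖x‖ ≤ r₃ → g x = 1) ∧
      (∀ x : E, ‖x‖ < r₁ → g x = 0) := by
  set φ : ℝ → ℝ := fun r => max 0 (min (min ((r - r₁)/(r₂ - r₁)) 1) ((r₄ - r)/(r₄ - r₃)))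
  have hφc : Continuous φ := by
    apply continuous_const.max
    apply Continuous.min
    apply Continuous.min
    · exact (continuous_id.sub continuous_const).div_const _
    · exact continuous_const
    · exact (continuous_const.sub continuous_id).div_const _
  refine ⟨fun x => φ ‖x‖, hφc.comp continuous_norm, ?_, ?_, fun x => le_max_left _ _, ?_, ?_, ?_⟩
  · apply HasCompactSupport.intro (isCompact_closedBall (0:E) r₄)
    intro x hx
    simp only [Metric.mem_closedBall, dist_zero_right, not_le] at hx
    have : (r₄ - ‖x‖)/(r₄ - r₃) < 0 := div_neg_of_neg_of_pos (by linarith) (by linarith)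
    simp only [φ]
    rw [max_eq_left]
    exact le_trans (min_le_right _ _) this.le
  · -- 0 ∉ tsupport
    have hsub : tsupport (fun x : E => φ ‖x‖) ⊆ {x : E | r₁ ≤ ‖x‖} := by
      apply closure_minimal _ (isClosed_le continuous_const continuous_norm)
      intro x hx
      simp only [Function.mem_support, ne_eq] at hx
      by_contra hc
      simp only [Set.mem_setOf_eq, not_le] at hc
      apply hx
      have : (‖x‖ - r₁)/(r₂ - r₁) < 0 := div_neg_of_neg_of_pos (by linarith) (by linarith)
      simp only [φ]
      rw [max_eq_left]
      exact le_trans (min_le_left _ _) (le_trans (min_le_left _ _) this.le)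
    intro h0
    have := hsub h0
    simp at this
    linarith
  · intro x
    simp only [φ]
    apply max_le (by norm_num)
    exact le_trans (min_le_left _ _) (min_le_right _ _)
  · intro x hx2 hx3
    have hA : (1:ℝ) ≤ (‖x‖ - r₁)/(r₂ - r₁) := by
      rw [le_div_iff₀ (by linarith)]; linarith
    have hB : (1:ℝ) ≤ (r₄ - ‖x‖)/(r₄ - r₃) := by
      rw [le_div_iff₀ (by linarith)]; linarith
    simp only [φ]
    rw [min_eq_right hA, min_eq_left hB, max_eq_right zero_le_one]
  · intro x hx
    have : (‖x‖ - r₁)/(r₂ - r₁) < 0 := div_neg_of_neg_of_pos (by linarith) (by linarith)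
    simp only [φ]
    rw [max_eq_left]
    exact le_trans (min_le_left _ _) (le_trans (min_le_left _ _) this.le)

end Bump



section Tail
variable {E : Type*} [NormedAddCommGroup E] [MeasurableSpace E] [OpensMeasurableSpace E]

lemma brei_tail_tendsto_zero (μ : Measure E) [IsFiniteMeasure μ] {s : ℕ → ℝ}
    (hs : Tendsto s atTop atTop) :
    Tendsto (fun K => (μ {x : E | s K ≤ ‖x‖}).toReal) atTop (𝓝 0) := by
  have hmeas : ∀ c : ℝ, MeasurableSet {x : E | c ≤ ‖x‖} :=
    fun c => (isClosed_le continuous_const continuous_norm).measurableSet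
  -- μ {x | n ≤ ‖x‖} → 0 along ℕ thresholds
  have h1 : Tendsto (fun n : ℕ => μ {x : E | (n:ℝ) ≤ ‖x‖}) atTop (𝓝 0) := by
    have h := MeasureTheory.tendsto_measure_iInter_atTop
      (μ := μ) (s := fun n : ℕ => {x : E | (n:ℝ) ≤ ‖x‖})
      (fun n => (hmeas _).nullMeasurableSet)
      (fun n m hnm => fun x hx => le_trans (by exact_mod_cast hnm : (n:ℝ) ≤ (m:ℝ)) hx)
      ⟨0, measure_ne_top μ _⟩
    have hempty : ⋂ n : ℕ, {x : E | (n:ℝ) ≤ ‖x‖} = ∅ := by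
      ext x
      simp only [Set.mem_iInter, Set.mem_setOf_eq, Set.mem_empty_iff_false, iff_false, not_forall,
        not_le]
      obtain ⟨n, hn⟩ := exists_nat_gt ‖x‖
      exact ⟨n, hn⟩
    rw [hempty, measure_empty] at h
    exact h
  -- now compose with toReal and the fact s K → ∞
  rw [ENNReal.tendsto_atTop_zero] at h1
  rw [Metric.tendsto_atTop]
  intro ε hε
  obtain ⟨n, hn⟩ := h1 (ENNReal.ofReal (ε/2)) (by simp [ENNReal.ofReal_pos]; linarith)
  obtain ⟨K₀, hK₀⟩ := eventually_atTop.1 (hs.eventually_ge_atTop (n:ℝ))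
  refine ⟨K₀, fun K hK => ?_⟩
  have hsub : {x : E | s K ≤ ‖x‖} ⊆ {x : E | (n:ℝ) ≤ ‖x‖} :=
    fun x hx => le_trans (hK₀ K hK) hx
  have hle : μ {x : E | s K ≤ ‖x‖} ≤ ENNReal.ofReal (ε/2) := le_trans (measure_mono hsub) (hn n le_rfl)
  have : (μ {x : E | s K ≤ ‖x‖}).toReal ≤ ε/2 := by
    rw [← ENNReal.toReal_ofReal (by linarith : (0:ℝ) ≤ ε/2)]
    exact ENNReal.toReal_mono (by simp) hle
  rw [Real.dist_eq, sub_zero, abs_of_nonneg ENNReal.toReal_nonneg]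
  linarith

lemma brei_key (μ : Measure E) [IsFiniteMeasure μ] (α : ℝ) (L : ℝ → ℝ)
    {T C₁ ρ : ℝ} (hT : 1 ≤ T) (hC₁ : 0 ≤ C₁) (hρ0 : 0 < ρ) (hρ1 : ρ < 1)
    (hLpos : ∀ t : ℝ, 0 < t → 0 < L t)
    (hann : ∀ t, T ≤ t → ∀ j : ℕ,
      t ^ α * L t * (μ {x : E | t * 2^j ≤ ‖x‖ ∧ ‖x‖ < t * 2^(j+1)}).toReal ≤ C₁ * ρ^j) :
    ∀ t, T ≤ t → ∀ m : ℕ,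
      t ^ α * L t * (μ {x : E | t * 2^m ≤ ‖x‖}).toReal ≤ (C₁/(1-ρ)) * ρ^m := by
  intro t ht m
  have htpos : (0:ℝ) < t := by linarith
  set c : ℝ := t ^ α * L t with hc
  have hcpos : 0 < c := mul_pos (Real.rpow_pos_of_pos htpos α) (hLpos t htpos)
  set tail : ℕ → ℝ := fun j => (μ {x : E | t * 2^j ≤ ‖x‖}).toReal with htail
  have hmeas : ∀ cth : ℝ, MeasurableSet {x : E | cth ≤ ‖x‖} :=
    fun cth => (isClosed_le continuous_const continuous_norm).measurableSet
  have hstep : ∀ j : ℕ, tail j ≤ (μ {x : E | t * 2^j ≤ ‖x‖ ∧ ‖x‖ < t * 2^(j+1)}).toReal + tail (j+1) := by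
    intro j
    have hsub : {x : E | t * 2^j ≤ ‖x‖} ⊆
        {x : E | t * 2^j ≤ ‖x‖ ∧ ‖x‖ < t * 2^(j+1)} ∪ {x : E | t * 2^(j+1) ≤ ‖x‖} := by
      intro x hx
      by_cases hcase : ‖x‖ < t * 2^(j+1)
      · exact Or.inl ⟨hx, hcase⟩
      · exact Or.inr (not_lt.1 hcase)
    calc tail j ≤ (μ ({x : E | t * 2^j ≤ ‖x‖ ∧ ‖x‖ < t * 2^(j+1)} ∪ {x : E | t * 2^(j+1) ≤ ‖x‖})).toReal := by
          apply ENNReal.toReal_mono (measure_ne_top μ _) (measure_mono hsub)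
    _ ≤ (μ {x : E | t * 2^j ≤ ‖x‖ ∧ ‖x‖ < t * 2^(j+1)} + μ {x : E | t * 2^(j+1) ≤ ‖x‖}).toReal := by
          apply ENNReal.toReal_mono _ (measure_union_le _ _)
          simp [ENNReal.add_eq_top, measure_ne_top]
    _ = _ := by rw [ENNReal.toReal_add (measure_ne_top μ _) (measure_ne_top μ _)]
  have claim : ∀ K : ℕ, c * tail m ≤ C₁ * ρ^m * (∑ k ∈ Finset.range K, ρ^k) + c * tail (m+K) := by
    intro K
    induction K with
    | zero => simp
    | succ K ih =>
      have h1 : c * tail (m+K) ≤ C₁ * ρ^(m+K) + c * tail (m+K+1) := by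
        have := hstep (m+K)
        have h2 := hann t ht (m+K)
        nlinarith [hcpos.le, ENNReal.toReal_nonneg (a := μ {x : E | t * 2^(m+K) ≤ ‖x‖ ∧ ‖x‖ < t * 2^(m+K+1)})]
      calc c * tail m ≤ C₁ * ρ^m * (∑ k ∈ Finset.range K, ρ^k) + c * tail (m+K) := ih
      _ ≤ C₁ * ρ^m * (∑ k ∈ Finset.range K, ρ^k) + (C₁ * ρ^(m+K) + c * tail (m+K+1)) := by linarith
      _ = C₁ * ρ^m * (∑ k ∈ Finset.range (K+1), ρ^k) + c * tail (m+(K+1)) := by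
          rw [Finset.sum_range_succ, pow_add]
          ring_nf
  have hsum : ∀ K : ℕ, (∑ k ∈ Finset.range K, ρ^k) ≤ 1/(1-ρ) := by
    intro K
    rw [le_div_iff₀ (by linarith)]
    nlinarith [pow_nonneg hρ0.le K, geom_sum_mul ρ K]
  have htend : Tendsto (fun K : ℕ => tail (m+K)) atTop (𝓝 0) := by
    have hs : Tendsto (fun K : ℕ => t * 2^(m+K)) atTop atTop := by
      have h2 : Tendsto (fun K : ℕ => ((2:ℝ))^K) atTop atTop :=
        tendsto_pow_atTop_atTop_of_one_lt (by norm_num)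
      have := h2.const_mul_atTop (show (0:ℝ) < t * 2^m by positivity)
      apply this.congr
      intro K
      rw [pow_add]; ring
    exact brei_tail_tendsto_zero μ hs
  have hlim : Tendsto (fun K : ℕ => C₁ * ρ^m * (1/(1-ρ)) + c * tail (m+K)) atTop
      (𝓝 (C₁ * ρ^m * (1/(1-ρ)) + c * 0)) :=
    tendsto_const_nhds.add (htend.const_mul c)
  have hfin : c * tail m ≤ C₁ * ρ^m * (1/(1-ρ)) + c * 0 := by
    apply ge_of_tendsto' hlim
    intro K
    have h1 := claim K
    have h2 := hsum K
    nlinarith [mul_nonneg hC₁ (pow_nonneg hρ0.le m)]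
  calc c * (μ {x : E | t * 2^m ≤ ‖x‖}).toReal = c * tail m := rfl
  _ ≤ C₁ * ρ^m * (1/(1-ρ)) + c * 0 := hfin
  _ = (C₁/(1-ρ)) * ρ^m := by ring
end Tail



section Helpers
variable {E : Type*} [NormedAddCommGroup E] [MeasurableSpace E] [OpensMeasurableSpace E]
  [SecondCountableTopology E]

lemma brei_integrable_bdd (μ : Measure E) [IsFiniteMeasure μ] {g : E → ℝ} {B : ℝ}
    (hg : AEStronglyMeasurable g μ) (hB : ∀ x, |g x| ≤ B) : Integrable g μ := by
  apply Integrable.mono' (integrable_const B) hg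
  exact ae_of_all _ (fun x => by rw [Real.norm_eq_abs]; exact hB x)

/-- bound on integral of a function supported in `{s ≤ ‖x‖}` -/
lemma brei_int_tail_bound (μ : Measure E) [IsFiniteMeasure μ] {g : E → ℝ} {B s : ℝ}
    (hg : Continuous g) (hB : ∀ x, |g x| ≤ B)
    (hsupp : ∀ x : E, g x ≠ 0 → s ≤ ‖x‖) :
    |∫ x, g x ∂μ| ≤ B * (μ {x : E | s ≤ ‖x‖}).toReal := by
  have hmeas : MeasurableSet {x : E | s ≤ ‖x‖} :=
    (isClosed_le continuous_const continuous_norm).measurableSet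
  have hBnn : 0 ≤ B := le_trans (abs_nonneg _) (hB 0)
  have h1 : |∫ x, g x ∂μ| ≤ ∫ x, |g x| ∂μ := by
    rw [← Real.norm_eq_abs]
    exact (norm_integral_le_integral_norm g).trans (le_of_eq (by simp [Real.norm_eq_abs]))
  have h2 : ∫ x, |g x| ∂μ ≤ ∫ x, Set.indicator {x : E | s ≤ ‖x‖} (fun _ => B) x ∂μ := by
    apply integral_mono
    · exact brei_integrable_bdd μ hg.abs.aestronglyMeasurable (fun x => by rw [abs_abs]; exact hB x)
    · exact (integrable_const B).indicator hmeas
    · intro x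
      by_cases hx : x ∈ {x : E | s ≤ ‖x‖}
      · rw [Set.indicator_of_mem hx]; exact hB x
      · rw [Set.indicator_of_notMem hx]
        rcases eq_or_ne (g x) 0 with h | h
        · simp [h]
        · exact absurd (hsupp x h) hx
  rw [integral_indicator_const _ hmeas] at h2
  calc |∫ x, g x ∂μ| ≤ ∫ x, |g x| ∂μ := h1
  _ ≤ B * (μ {x : E | s ≤ ‖x‖}).toReal := by simpa [smul_eq_mul, mul_comm, measureReal_def] using h2

end Helpers

section Chi
variable {E : Type*} [NormedAddCommGroup E]

/-- cutoff: 1 on ball `2^m`, 0 outside ball `2^(m+1)` -/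
def breiChi (m : ℕ) (x : E) : ℝ := max 0 (min 1 (2 - ‖x‖/2^m))

lemma breiChi_cont (m : ℕ) : Continuous (breiChi (E := E) m) := by
  unfold breiChi
  exact continuous_const.max ((continuous_const.min
    (continuous_const.sub (continuous_norm.div_const _))))

lemma breiChi_nonneg (m : ℕ) (x : E) : 0 ≤ breiChi m x := le_max_left _ _

lemma breiChi_le_one (m : ℕ) (x : E) : breiChi m x ≤ 1 :=
  max_le zero_le_one (min_le_left _ _)

lemma breiChi_eq_one {m : ℕ} {x : E} (h : ‖x‖ ≤ 2^m) : breiChi m x = 1 := by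
  unfold breiChi
  have h2 : (0:ℝ) < 2^m := by positivity
  have : (1:ℝ) ≤ 2 - ‖x‖/2^m := by
    have : ‖x‖/2^m ≤ 1 := (div_le_one h2).2 h
    linarith
  rw [min_eq_left this, max_eq_right zero_le_one]

lemma breiChi_eq_zero {m : ℕ} {x : E} (h : (2:ℝ)^(m+1) ≤ ‖x‖) : breiChi m x = 0 := by
  unfold breiChi
  have h2 : (0:ℝ) < 2^m := by positivity
  have : 2 - ‖x‖/2^m ≤ 0 := by
    have : (2:ℝ) ≤ ‖x‖/2^m := by
      rw [le_div_iff₀ h2]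
      calc (2:ℝ) * 2^m = 2^(m+1) := by ring
      _ ≤ ‖x‖ := h
    linarith
  rw [max_eq_left (le_trans (min_le_right _ _) this)]

lemma breiChi_mono {m m' : ℕ} (h : m ≤ m') (x : E) : breiChi m x ≤ breiChi m' x := by
  unfold breiChi
  apply max_le_max le_rfl
  apply min_le_min le_rfl
  have h1 : (0:ℝ) < 2^m := by positivity
  have h2 : (0:ℝ) < 2^m' := by positivity
  have : ‖x‖/2^m' ≤ ‖x‖/2^m :=
    div_le_div_of_nonneg_left (norm_nonneg x) h1 (by exact_mod_cast pow_le_pow_right₀ one_le_two h)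
  linarith

lemma breiChi_tendsto (x : E) : ∀ᶠ m : ℕ in atTop, breiChi m x = 1 := by
  obtain ⟨m₀, hm₀⟩ := pow_unbounded_of_one_lt ‖x‖ (by norm_num : (1:ℝ) < 2)
  rw [eventually_atTop]
  exact ⟨m₀, fun m hm => breiChi_eq_one (le_trans hm₀.le
    (by exact_mod_cast pow_le_pow_right₀ one_le_two hm))⟩

end Chi

section PointwiseLimit
variable {E : Type*} [NormedAddCommGroup E] [NormedSpace ℝ E] [ProperSpace E]
  [MeasurableSpace E] [BorelSpace E] [SecondCountableTopology E]

lemma brei_pointwise (μ : Measure E) [IsProbabilityMeasure μ] (Λ : Measure E)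
    (α : ℝ) (L : ℝ → ℝ) (β : ℝ)
    (f : E → ℝ) (hf : Continuous f) (δ M₀ : ℝ) (hδ : 0 < δ) (hM₀ : 0 ≤ M₀)
    (hfB : ∀ x, |f x| ≤ M₀) (hf0 : ∀ x : E, ‖x‖ < δ → f x = 0)
    (hconvμ : ∀ g : E → ℝ, Continuous g → HasCompactSupport g → (0:E) ∉ tsupport g →
      Tendsto (fun t : ℝ => t^α * L t * ∫ x, g (t⁻¹ • x) ∂μ) atTop (𝓝 (∫ x, g x ∂Λ)))
    {T₁ C₂ ρ : ℝ} (hT₁ : 1 ≤ T₁) (hC₂ : 0 ≤ C₂) (hρ0 : 0 < ρ) (hρ1 : ρ < 1)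
    (hKEY : ∀ t, T₁ ≤ t → ∀ m : ℕ,
      t^α * L t * (μ {x : E | t * 2^m ≤ ‖x‖}).toReal ≤ C₂ * ρ^m)
    {T₅ C₅ : ℝ} (hT₅ : 1 ≤ T₅)
    (htail5 : ∀ t, T₅ ≤ t → ∀ a : E →L[ℝ] E, a ≠ 0 →
      t^α * L t * (μ {x : E | t * δ / ‖a‖ ≤ ‖x‖}).toReal ≤ C₅ * (1 + ‖a‖^β))
    (hLpos : ∀ t : ℝ, 0 < t → 0 < L t)
    (a : E →L[ℝ] E) :
    Tendsto (fun t : ℝ => t^α * L t * ∫ x, f (t⁻¹ • a x) ∂μ) atTop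
      (𝓝 (∫ x, f (a x) ∂Λ)) := by
  have hf00 : f (0 : E) = 0 := hf0 0 (by simpa using hδ)
  rcases eq_or_ne a 0 with rfl | ha
  · simp only [ContinuousLinearMap.zero_apply, smul_zero, hf00, integral_const,
      measure_univ, ENNReal.toReal_one, smul_eq_mul, mul_one, mul_zero, integral_zero]
    exact tendsto_const_nhds
  have hna : 0 < ‖a‖ := norm_pos_iff.2 ha
  have hδa : 0 < δ / ‖a‖ := div_pos hδ hna
  -- vanishing of f ∘ a near 0
  have hfa0 : ∀ x : E, ‖x‖ < δ / ‖a‖ → f (a x) = 0 := by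
    intro x hx
    apply hf0
    calc ‖a x‖ ≤ ‖a‖ * ‖x‖ := a.le_opNorm x
    _ < ‖a‖ * (δ / ‖a‖) := by exact mul_lt_mul_of_pos_left hx hna
    _ = δ := by field_simp
  -- admissibility of truncations
  have hmk : ∀ (c : E → ℝ), Continuous c → (∀ x : E, ‖x‖ < δ / ‖a‖ → c x = 0) → ∀ m : ℕ,
      Continuous (fun x => c x * breiChi m x) ∧
      HasCompactSupport (fun x => c x * breiChi m x) ∧
      (0:E) ∉ tsupport (fun x => c x * breiChi m x) := by
    intro c hc hc0 m
    refine ⟨hc.mul (breiChi_cont m), ?_, ?_⟩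
    · apply HasCompactSupport.intro (isCompact_closedBall (0:E) (2^(m+1)))
      intro x hx
      simp only [Metric.mem_closedBall, dist_zero_right, not_le] at hx
      rw [breiChi_eq_zero hx.le, mul_zero]
    · have hsub : tsupport (fun x : E => c x * breiChi m x) ⊆ {x : E | δ/‖a‖ ≤ ‖x‖} := by
        apply closure_minimal _ (isClosed_le continuous_const continuous_norm)
        intro x hx
        simp only [Function.mem_support, ne_eq] at hx
        by_contra hcon
        simp only [Set.mem_setOf_eq, not_le] at hcon
        exact hx (by rw [hc0 x hcon, zero_mul])
      intro h0
      have := hsub h0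
      simp only [Set.mem_setOf_eq, norm_zero] at this
      linarith
  set gm : ℕ → E → ℝ := fun m x => f (a x) * breiChi m x with hgm
  set hfn : ℕ → E → ℝ := fun m x => |f (a x)| * breiChi m x with hhfn
  have hfacont : Continuous fun x => f (a x) := hf.comp a.continuous
  have hgmk := hmk _ hfacont hfa0
  have hhfk := hmk _ hfacont.abs (fun x hx => by rw [hfa0 x hx, abs_zero])
  have hgmconv : ∀ m : ℕ, Tendsto (fun t : ℝ => t^α * L t * ∫ x, gm m (t⁻¹ • x) ∂μ) atTop
      (𝓝 (∫ x, gm m x ∂Λ)) := fun m =>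
    hconvμ (gm m) (hgmk m).1 (hgmk m).2.1 (hgmk m).2.2
  have hhfconv : ∀ m : ℕ, Tendsto (fun t : ℝ => t^α * L t * ∫ x, hfn m (t⁻¹ • x) ∂μ) atTop
      (𝓝 (∫ x, hfn m x ∂Λ)) := fun m =>
    hconvμ (hfn m) (hhfk m).1 (hhfk m).2.1 (hhfk m).2.2
  -- positivity of the normalisation
  have hcpos : ∀ t : ℝ, 1 ≤ t → 0 < t^α * L t := by
    intro t ht
    have htpos : (0:ℝ) < t := by linarith
    exact mul_pos (Real.rpow_pos_of_pos htpos α) (hLpos t htpos)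
  -- norm of t⁻¹ • y
  have hnsmul : ∀ (t : ℝ), 1 ≤ t → ∀ y : E, ‖t⁻¹ • y‖ = ‖y‖ / t := by
    intro t ht y
    rw [norm_smul, norm_inv, Real.norm_eq_abs, abs_of_pos (by linarith : (0:ℝ) < t)]
    rw [inv_mul_eq_div]
  -- support condition for the full function
  have hsuppfull : ∀ (t : ℝ), 1 ≤ t → ∀ x : E, f (t⁻¹ • a x) ≠ 0 → t * δ / ‖a‖ ≤ ‖x‖ := by
    intro t ht x hx
    have htpos : (0:ℝ) < t := by linarith
    have h1 : δ ≤ ‖t⁻¹ • a x‖ := by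
      by_contra hcon
      exact hx (hf0 _ (not_le.1 hcon))
    rw [hnsmul t ht] at h1
    have h2 : t * δ ≤ ‖a x‖ := by
      rw [le_div_iff₀ htpos] at h1
      linarith
    have h3 : ‖a x‖ ≤ ‖a‖ * ‖x‖ := a.le_opNorm x
    rw [div_le_iff₀ hna]
    linarith
  -- bounds on truncations
  have hgmbd : ∀ (m : ℕ) (y : E), |gm m y| ≤ M₀ := by
    intro m y
    simp only [hgm, abs_mul]
    calc |f (a y)| * |breiChi m y| ≤ M₀ * 1 := by
          apply mul_le_mul (hfB _) _ (abs_nonneg _) hM₀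
          rw [abs_of_nonneg (breiChi_nonneg m y)]
          exact breiChi_le_one m y
    _ = M₀ := mul_one M₀
  have hhfbd : ∀ (m : ℕ) (y : E), |hfn m y| ≤ M₀ := by
    intro m y
    simp only [hhfn, abs_mul, abs_abs]
    calc |f (a y)| * |breiChi m y| ≤ M₀ * 1 := by
          apply mul_le_mul (hfB _) _ (abs_nonneg _) hM₀
          rw [abs_of_nonneg (breiChi_nonneg m y)]
          exact breiChi_le_one m y
    _ = M₀ := mul_one M₀
  -- integrability over μ
  have hintu : ∀ t : ℝ, Integrable (fun x => f (t⁻¹ • a x)) μ := fun t =>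
    brei_integrable_bdd μ (hf.comp ((a.continuous).const_smul t⁻¹)).aestronglyMeasurable
      (fun x => hfB _)
  have hintv : ∀ (m : ℕ) (t : ℝ), Integrable (fun x => gm m (t⁻¹ • x)) μ := fun m t =>
    brei_integrable_bdd μ ((hgmk m).1.comp (continuous_const_smul t⁻¹)).aestronglyMeasurable
      (fun x => hgmbd m _)
  -- error bound between full and truncated integrals
  have herr : ∀ (m : ℕ) (t : ℝ), max T₁ 1 ≤ t →
      |t^α * L t * ∫ x, f (t⁻¹ • a x) ∂μ - t^α * L t * ∫ x, gm m (t⁻¹ • x) ∂μ|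
        ≤ M₀ * (C₂ * ρ^m) := by
    intro m t ht
    have ht1 : (1:ℝ) ≤ t := le_trans (le_max_right _ _) ht
    have htT : T₁ ≤ t := le_trans (le_max_left _ _) ht
    have htpos : (0:ℝ) < t := by linarith
    set w : E → ℝ := fun x => f (t⁻¹ • a x) * (1 - breiChi m (t⁻¹ • x)) with hw
    have hweq : ∀ x : E, f (t⁻¹ • a x) - gm m (t⁻¹ • x) = w x := by
      intro x
      simp only [hw, hgm, ContinuousLinearMap.map_smul]
      ring
    have hwcont : Continuous w := by
      apply Continuous.mul (hf.comp ((a.continuous).const_smul t⁻¹))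
      exact continuous_const.sub ((breiChi_cont m).comp (continuous_const_smul t⁻¹))
    have hwbd : ∀ x, |w x| ≤ M₀ := by
      intro x
      simp only [hw, abs_mul]
      calc |f (t⁻¹ • a x)| * |1 - breiChi m (t⁻¹ • x)| ≤ M₀ * 1 := by
            apply mul_le_mul (hfB _) _ (abs_nonneg _) hM₀
            rw [abs_le]
            constructor
            · linarith [breiChi_le_one m (t⁻¹ • x)]
            · linarith [breiChi_nonneg m (t⁻¹ • x)]
      _ = M₀ := mul_one M₀
    have hwsupp : ∀ x : E, w x ≠ 0 → t * 2^m ≤ ‖x‖ := by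
      intro x hx
      have h1 : breiChi m (t⁻¹ • x) ≠ 1 := by
        intro hcon
        apply hx
        simp only [hw, hcon, sub_self, mul_zero]
      have h2 : ¬ (‖t⁻¹ • x‖ ≤ 2^m) := fun hcon => h1 (breiChi_eq_one hcon)
      rw [hnsmul t ht1, not_le, lt_div_iff₀ htpos] at h2
      linarith [mul_comm t ((2:ℝ)^m)]
    have hdiff : ∫ x, f (t⁻¹ • a x) ∂μ - ∫ x, gm m (t⁻¹ • x) ∂μ = ∫ x, w x ∂μ := by
      rw [← integral_sub (hintu t) (hintv m t)]
      exact integral_congr_ae (ae_of_all _ hweq)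
    have hbound := brei_int_tail_bound μ hwcont hwbd hwsupp
    have hkey := hKEY t htT m
    have hcp := hcpos t ht1
    calc |t^α * L t * ∫ x, f (t⁻¹ • a x) ∂μ - t^α * L t * ∫ x, gm m (t⁻¹ • x) ∂μ|
        = (t^α * L t) * |∫ x, f (t⁻¹ • a x) ∂μ - ∫ x, gm m (t⁻¹ • x) ∂μ| := by
          rw [← mul_sub, abs_mul, abs_of_pos hcp]
    _ = (t^α * L t) * |∫ x, w x ∂μ| := by rw [hdiff]
    _ ≤ (t^α * L t) * (M₀ * (μ {x : E | t * 2^m ≤ ‖x‖}).toReal) :=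
          mul_le_mul_of_nonneg_left hbound hcp.le
    _ = M₀ * ((t^α * L t) * (μ {x : E | t * 2^m ≤ ‖x‖}).toReal) := by ring
    _ ≤ M₀ * (C₂ * ρ^m) := mul_le_mul_of_nonneg_left hkey hM₀
  -- uniform bound on truncated Λ-integrals of |f ∘ a|
  set B₅ : ℝ := M₀ * (C₅ * (1 + ‖a‖^β)) with hB₅
  have hdbound : ∀ (m : ℕ) (t : ℝ), max T₅ 1 ≤ t →
      t^α * L t * ∫ x, hfn m (t⁻¹ • x) ∂μ ≤ B₅ := by
    intro m t ht
    have ht1 : (1:ℝ) ≤ t := le_trans (le_max_right _ _) ht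
    have htT : T₅ ≤ t := le_trans (le_max_left _ _) ht
    have hcont : Continuous fun x => hfn m (t⁻¹ • x) :=
      (hhfk m).1.comp (continuous_const_smul t⁻¹)
    have hbd : ∀ x, |hfn m (t⁻¹ • x)| ≤ M₀ := fun x => hhfbd m _
    have hsupp : ∀ x : E, hfn m (t⁻¹ • x) ≠ 0 → t * δ / ‖a‖ ≤ ‖x‖ := by
      intro x hx
      apply hsuppfull t ht1 x
      intro hcon
      apply hx
      simp only [hhfn]
      rw [show f (a (t⁻¹ • x)) = f (t⁻¹ • a x) from by rw [ContinuousLinearMap.map_smul], hcon, abs_zero, zero_mul]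
    have hb := brei_int_tail_bound μ hcont hbd hsupp
    have hcp := hcpos t ht1
    calc t^α * L t * ∫ x, hfn m (t⁻¹ • x) ∂μ
        ≤ (t^α * L t) * |∫ x, hfn m (t⁻¹ • x) ∂μ| :=
          mul_le_mul_of_nonneg_left (le_abs_self _) hcp.le
    _ ≤ (t^α * L t) * (M₀ * (μ {x : E | t * δ / ‖a‖ ≤ ‖x‖}).toReal) :=
          mul_le_mul_of_nonneg_left hb hcp.le
    _ = M₀ * ((t^α * L t) * (μ {x : E | t * δ / ‖a‖ ≤ ‖x‖}).toReal) := by ring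
    _ ≤ M₀ * (C₅ * (1 + ‖a‖^β)) := mul_le_mul_of_nonneg_left (htail5 t htT a ha) hM₀
  have hfa_aesm : AEStronglyMeasurable (fun x => f (a x)) Λ := hfacont.aestronglyMeasurable
  -- limit of the truncated Λ-integrals
  have hclim : Tendsto (fun m : ℕ => ∫ x, gm m x ∂Λ) atTop (𝓝 (∫ x, f (a x) ∂Λ)) := by
    by_cases hint : Integrable (fun x => f (a x)) Λ
    · apply tendsto_integral_of_dominated_convergence (fun x => |f (a x)|)
      · exact fun m => (hgmk m).1.aestronglyMeasurable
      · exact hint.abs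
      · intro m
        apply ae_of_all
        intro x
        rw [Real.norm_eq_abs]
        simp only [hgm, abs_mul]
        calc |f (a x)| * |breiChi m x| ≤ |f (a x)| * 1 := by
              apply mul_le_mul_of_nonneg_left _ (abs_nonneg _)
              rw [abs_of_nonneg (breiChi_nonneg m x)]
              exact breiChi_le_one m x
        _ = |f (a x)| := mul_one _
      · apply ae_of_all
        intro x
        have hev : (fun _ : ℕ => f (a x)) =ᶠ[atTop] fun m => gm m x :=
          (breiChi_tendsto x).mono (fun m hm => by simp only [hgm, hm, mul_one])
        exact Tendsto.congr' hev tendsto_const_nhds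
    · rw [integral_undef hint]
      have hex : ∃ m₀ : ℕ, ¬ Integrable (hfn m₀) Λ := by
        by_contra hcon
        push_neg at hcon
        apply hint
        have hub : ∀ m : ℕ, ∫ x, hfn m x ∂Λ ≤ B₅ := by
          intro m
          apply le_of_tendsto (hhfconv m)
          rw [eventually_atTop]
          exact ⟨max T₅ 1, fun t ht => hdbound m t ht⟩
        have hlub : ∀ m : ℕ, ∫⁻ x, ENNReal.ofReal (hfn m x) ∂Λ ≤ ENNReal.ofReal B₅ := by
          intro m
          rw [← ofReal_integral_eq_lintegral_ofReal (hcon m)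
            (ae_of_all _ fun x => mul_nonneg (abs_nonneg _) (breiChi_nonneg m x))]
          exact ENNReal.ofReal_le_ofReal (hub m)
        have hmct : Tendsto (fun m : ℕ => ∫⁻ x, ENNReal.ofReal (hfn m x) ∂Λ) atTop
            (𝓝 (∫⁻ x, ENNReal.ofReal |f (a x)| ∂Λ)) := by
          apply lintegral_tendsto_of_tendsto_of_monotone
          · exact fun m => (ENNReal.measurable_ofReal.comp (hhfk m).1.measurable).aemeasurable
          · apply ae_of_all
            intro x m m' hmm'
            exact ENNReal.ofReal_le_ofReal
              (mul_le_mul_of_nonneg_left (breiChi_mono hmm' x) (abs_nonneg _))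
          · apply ae_of_all
            intro x
            have hev : (fun _ : ℕ => ENNReal.ofReal |f (a x)|) =ᶠ[atTop]
                fun m => ENNReal.ofReal (hfn m x) :=
              (breiChi_tendsto x).mono (fun m hm => by simp only [hhfn, hm, mul_one])
            exact Tendsto.congr' hev tendsto_const_nhds
        have hfin : ∫⁻ x, ENNReal.ofReal |f (a x)| ∂Λ ≤ ENNReal.ofReal B₅ :=
          le_of_tendsto hmct (Eventually.of_forall hlub)
        refine ⟨hfa_aesm, ?_⟩
        rw [hasFiniteIntegral_iff_norm]
        simp_rw [Real.norm_eq_abs]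
        exact lt_of_le_of_lt hfin ENNReal.ofReal_lt_top
      obtain ⟨m₀, hm₀⟩ := hex
      have hnotint : ∀ m : ℕ, m₀ ≤ m → ¬ Integrable (gm m) Λ := by
        intro m hm hcon
        apply hm₀
        have habs : Integrable (fun x => |gm m x|) Λ := hcon.abs
        have heq : (fun x => |gm m x|) = hfn m := by
          funext x
          simp only [hgm, hhfn, abs_mul, abs_of_nonneg (breiChi_nonneg m x)]
        rw [heq] at habs
        apply habs.mono (hhfk m₀).1.aestronglyMeasurable
        apply ae_of_all
        intro x
        have h1 : (0:ℝ) ≤ hfn m₀ x := mul_nonneg (abs_nonneg _) (breiChi_nonneg m₀ x)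
        have h2 : (0:ℝ) ≤ hfn m x := mul_nonneg (abs_nonneg _) (breiChi_nonneg m x)
        rw [Real.norm_eq_abs, Real.norm_eq_abs, abs_of_nonneg h1, abs_of_nonneg h2]
        simp only [hhfn]
        exact mul_le_mul_of_nonneg_left (breiChi_mono hm x) (abs_nonneg _)
      have hev0 : (fun _ : ℕ => (0:ℝ)) =ᶠ[atTop] (fun m => ∫ x, gm m x ∂Λ) := by
        rw [EventuallyEq, eventually_atTop]
        exact ⟨m₀, fun m hm => (integral_undef (hnotint m hm)).symm⟩
      exact Tendsto.congr' hev0 tendsto_const_nhds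
  -- final ε/3 argument
  rw [Metric.tendsto_atTop]
  intro ε hε
  have h1 : Tendsto (fun m : ℕ => M₀ * (C₂ * ρ^m)) atTop (𝓝 0) := by
    simpa using ((tendsto_pow_atTop_nhds_zero_of_lt_one hρ0.le hρ1).const_mul C₂).const_mul M₀
  have e1 : ∀ᶠ m : ℕ in atTop, M₀ * (C₂ * ρ^m) < ε/3 := by
    apply h1.eventually_lt_const
    linarith
  have e2 : ∀ᶠ m : ℕ in atTop, |∫ x, gm m x ∂Λ - ∫ x, f (a x) ∂Λ| < ε/3 := by
    obtain ⟨N, hN⟩ := Metric.tendsto_atTop.1 hclim (ε/3) (by linarith)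
    rw [eventually_atTop]
    exact ⟨N, fun m hm => by have := hN m hm; rwa [Real.dist_eq] at this⟩
  obtain ⟨m, hm1, hm2⟩ := (e1.and e2).exists
  obtain ⟨N₀, hN₀⟩ := Metric.tendsto_atTop.1 (hgmconv m) (ε/3) (by linarith)
  refine ⟨max N₀ (max T₁ 1), fun t ht => ?_⟩
  have htN : N₀ ≤ t := le_trans (le_max_left _ _) ht
  have htT : max T₁ 1 ≤ t := le_trans (le_max_right _ _) ht
  have e3 := herr m t htT
  have e4 := hN₀ t htN
  rw [Real.dist_eq] at e4 ⊢
  have htri := abs_sub_le (t^α * L t * ∫ x, f (t⁻¹ • a x) ∂μ)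
    (t^α * L t * ∫ x, gm m (t⁻¹ • x) ∂μ) (∫ x, f (a x) ∂Λ)
  have htri2 := abs_sub_le (t^α * L t * ∫ x, gm m (t⁻¹ • x) ∂μ)
    (∫ x, gm m x ∂Λ) (∫ x, f (a x) ∂Λ)
  linarith

end PointwiseLimit

section OpCont
variable {E : Type*} [NormedAddCommGroup E] [NormedSpace ℝ E]
  [MeasurableSpace E] [OpensMeasurableSpace E] [SecondCountableTopology E]

lemma brei_opcont (μ : Measure E) [IsProbabilityMeasure μ] {f : E → ℝ} (hf : Continuous f)
    {M₀ : ℝ} (hfB : ∀ x, |f x| ≤ M₀) (c : ℝ) :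
    Continuous fun a : E →L[ℝ] E => ∫ x, f (c • a x) ∂μ := by
  apply SeqContinuous.continuous
  intro an a han
  refine tendsto_integral_of_dominated_convergence (fun _ => M₀) ?_ ?_ ?_ ?_
  · exact fun n => (hf.comp (((an n).continuous).const_smul c)).aestronglyMeasurable
  · exact integrable_const M₀
  · exact fun n => ae_of_all _ fun x => by rw [Real.norm_eq_abs]; exact hfB _
  · apply ae_of_all
    intro x
    have h1 : Tendsto (fun n => an n x) atTop (𝓝 (a x)) :=
      ((ContinuousLinearMap.apply ℝ E x).continuous.tendsto a).comp han
    exact ((hf.comp (continuous_const_smul c)).tendsto (a x)).comp h1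

end OpCont

/-- multivariate Breiman lemma: if `X` is `α`-regularly varying
with tail measure `Λ` (slowly varying `L` bounded away from `0,∞` on compacts),
`A` is a random matrix independent of `X` with `𝔼‖A‖^β < ∞` for some `β > α`,
then `AX` is `α`-regularly varying with tail measure
`⟨f, Λ̃⟩ = 𝔼[⟨f ∘ A, Λ⟩]`. -/
theorem multivariate_breiman
    {Ω : Type*} [MeasurableSpace Ω] {d : ℕ}
    [MeasurableSpace (EuclideanSpace ℝ (Fin d) →L[ℝ] EuclideanSpace ℝ (Fin d))]
    [BorelSpace (EuclideanSpace ℝ (Fin d) →L[ℝ] EuclideanSpace ℝ (Fin d))]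
    (P : Measure Ω) [IsProbabilityMeasure P]
    (X : Ω → EuclideanSpace ℝ (Fin d)) (hX : Measurable X)
    (A : Ω → EuclideanSpace ℝ (Fin d) →L[ℝ] EuclideanSpace ℝ (Fin d))
    (hA : Measurable A)
    (hAX : IndepFun A X P)
    (α β : ℝ) (hα : 0 < α) (hβ : α < β)
    (hAmom : Integrable (fun ω => ‖A ω‖ ^ β) P)
    (L : ℝ → ℝ)
    (hLslow : ∀ l : ℝ, 0 < l →
      Tendsto (fun t => L (l * t) / L t) atTop (𝓝 1))
    (hLbdd : ∀ a b : ℝ, 0 < a →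
      ∃ m M : ℝ, 0 < m ∧ ∀ t ∈ Set.Icc a b, m ≤ L t ∧ L t ≤ M)
    (Λ : Measure (EuclideanSpace ℝ (Fin d)))
    (hconv : ∀ f : EuclideanSpace ℝ (Fin d) → ℝ, Continuous f →
      HasCompactSupport f → (0 : EuclideanSpace ℝ (Fin d)) ∉ tsupport f →
      Tendsto (fun t : ℝ => t ^ α * L t * ∫ ω, f (t⁻¹ • X ω) ∂P) atTop
        (𝓝 (∫ x, f x ∂Λ))) :
    ∀ f : EuclideanSpace ℝ (Fin d) → ℝ, Continuous f →
      HasCompactSupport f → (0 : EuclideanSpace ℝ (Fin d)) ∉ tsupport f →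
      Tendsto (fun t : ℝ => t ^ α * L t * ∫ ω, f (t⁻¹ • (A ω) (X ω)) ∂P) atTop
        (𝓝 (∫ ω, ∫ x, f ((A ω) x) ∂Λ ∂P)) := by
  intro f hfc hfcs hf0t
  classical
  have hβpos : (0:ℝ) < β := lt_trans hα hβ
  -- sup-norm bound
  obtain ⟨M₀, hM₀b⟩ := hfc.bounded_above_of_compact_support hfcs
  have hfB : ∀ x, |f x| ≤ M₀ := fun x => by
    have := hM₀b x; rwa [Real.norm_eq_abs] at this
  have hM₀ : 0 ≤ M₀ := le_trans (abs_nonneg _) (hfB 0)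
  -- vanishing radius
  obtain ⟨δ, hδpos, hδball⟩ := Metric.isOpen_iff.1 (isClosed_tsupport f).isOpen_compl 0 hf0t
  have hf0 : ∀ x : EuclideanSpace ℝ (Fin d), ‖x‖ < δ → f x = 0 := by
    intro x hx
    exact image_eq_zero_of_notMem_tsupport
      (hδball (by simpa [Metric.mem_ball, dist_zero_right] using hx))
  -- laws
  set μ : Measure (EuclideanSpace ℝ (Fin d)) := P.map X with hμd
  set ν : Measure (EuclideanSpace ℝ (Fin d) →L[ℝ] EuclideanSpace ℝ (Fin d)) := P.map A with hνd
  haveI : IsProbabilityMeasure μ := Measure.isProbabilityMeasure_map hX.aemeasurable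
  haveI : IsProbabilityMeasure ν := Measure.isProbabilityMeasure_map hA.aemeasurable
  haveI hsc2 : SecondCountableTopology
      ((EuclideanSpace ℝ (Fin d) →L[ℝ] EuclideanSpace ℝ (Fin d)) × EuclideanSpace ℝ (Fin d)) :=
    inferInstance
  haveI hom2 : OpensMeasurableSpace
      ((EuclideanSpace ℝ (Fin d) →L[ℝ] EuclideanSpace ℝ (Fin d)) × EuclideanSpace ℝ (Fin d)) :=
    inferInstance
  have hconvμ : ∀ g : EuclideanSpace ℝ (Fin d) → ℝ, Continuous g → HasCompactSupport g →
      (0 : EuclideanSpace ℝ (Fin d)) ∉ tsupport g →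
      Tendsto (fun t : ℝ => t ^ α * L t * ∫ x, g (t⁻¹ • x) ∂μ) atTop (𝓝 (∫ x, g x ∂Λ)) := by
    intro g hg hgcs hg0
    apply (hconv g hg hgcs hg0).congr
    intro t
    have hcont : Continuous (fun x : EuclideanSpace ℝ (Fin d) => g (t⁻¹ • x)) :=
      hg.comp (continuous_const_smul t⁻¹)
    have hsm : AEStronglyMeasurable (fun x : EuclideanSpace ℝ (Fin d) => g (t⁻¹ • x)) (P.map X) :=
      hcont.aestronglyMeasurable
    rw [hμd]
    congr 1
    exact (integral_map hX.aemeasurable hsm).symm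
  have hLpos := brei_Lpos hLbdd
  have hL2 := hLslow 2 (by norm_num)
  -- choice of ε
  have h2a : (0:ℝ) < (2:ℝ)^(-α) := Real.rpow_pos_of_pos (by norm_num) _
  have h2a1 : (2:ℝ)^(-α) < 1 := Real.rpow_lt_one_of_one_lt_of_neg (by norm_num) (by linarith)
  have h2ba : (1:ℝ) < (2:ℝ)^(β-α) :=
    (Real.one_lt_rpow_iff_of_pos (by norm_num)).2 (Or.inl ⟨one_lt_two, by linarith⟩)
  set ε : ℝ := min ((1 - (2:ℝ)^(-α))/2) ((2:ℝ)^(β-α) - 1) with hεd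
  have hε : 0 < ε := lt_min (by linarith) (by linarith)
  have hε1 : (2:ℝ)^(-α) < 1 - ε := by
    have h := min_le_left ((1 - (2:ℝ)^(-α))/2) ((2:ℝ)^(β-α) - 1)
    rw [← hεd] at h
    linarith
  have hε2 : 1 + ε ≤ (2:ℝ)^(β-α) := by
    have h := min_le_right ((1 - (2:ℝ)^(-α))/2) ((2:ℝ)^(β-α) - 1)
    rw [← hεd] at h
    linarith
  have hεlt1 : ε < 1 := by
    have h := min_le_left ((1 - (2:ℝ)^(-α))/2) ((2:ℝ)^(β-α) - 1)
    rw [← hεd] at h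
    linarith
  obtain ⟨Tr, hTr1, hTr⟩ := brei_Lratio hL2 hLpos hε
  have hchain := brei_Lchain hTr hTr1 hε hεlt1
  obtain ⟨C₄, T₄, hC₄, hT₄1, hT₄⟩ := brei_Lgrowth hL2 hLbdd (show (0:ℝ) < β - α by linarith)
  -- bump and annulus bound
  obtain ⟨g₀, hg₀c, hg₀cs, hg₀0, hg₀nn, hg₀le1, hg₀one, hg₀z⟩ :=
    brei_bump (E := EuclideanSpace ℝ (Fin d)) (1/2) 1 2 3 (by norm_num) (by norm_num)
      (by norm_num) (by norm_num)
  have hg₀conv := hconvμ g₀ hg₀c hg₀cs hg₀0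
  set c₀ : ℝ := ∫ x, g₀ x ∂Λ with hc₀d
  have hc₀nn : 0 ≤ c₀ := integral_nonneg hg₀nn
  obtain ⟨T₀', hT₀'⟩ := eventually_atTop.1 (hg₀conv.eventually (eventually_le_nhds (lt_add_one c₀)))
  set T₀ : ℝ := max T₀' 1 with hT₀d
  have hannb : ∀ u : ℝ, T₀ ≤ u →
      u^α * L u * (μ {x : EuclideanSpace ℝ (Fin d) | u ≤ ‖x‖ ∧ ‖x‖ < 2*u}).toReal ≤ c₀ + 1 := by
    intro u hu
    have hu1 : (1:ℝ) ≤ u := le_trans (le_max_right _ _) hu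
    have hupos : (0:ℝ) < u := by linarith
    have h1 := hT₀' u (le_trans (le_max_left _ _) hu)
    have hS : MeasurableSet {x : EuclideanSpace ℝ (Fin d) | u ≤ ‖x‖ ∧ ‖x‖ < 2*u} :=
      ((isClosed_le continuous_const continuous_norm).measurableSet).inter
        ((isOpen_lt continuous_norm continuous_const).measurableSet)
    have hcomp : (μ {x : EuclideanSpace ℝ (Fin d) | u ≤ ‖x‖ ∧ ‖x‖ < 2*u}).toReal
        ≤ ∫ x, g₀ (u⁻¹ • x) ∂μ := by
      rw [← measureReal_def, ← integral_indicator_one hS]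
      apply integral_mono ((integrable_const (1:ℝ)).indicator hS)
      · exact brei_integrable_bdd μ
          ((hg₀c.comp (continuous_const_smul u⁻¹)).aestronglyMeasurable)
          (B := 1) (fun x => abs_le.2 ⟨by linarith [hg₀nn (u⁻¹ • x)], hg₀le1 _⟩)
      · intro x
        by_cases hx : x ∈ {x : EuclideanSpace ℝ (Fin d) | u ≤ ‖x‖ ∧ ‖x‖ < 2*u}
        · rw [Set.indicator_of_mem hx]
          obtain ⟨hx1, hx2⟩ := hx
          have hn : ‖u⁻¹ • x‖ = ‖x‖ / u := by
            rw [norm_smul, norm_inv, Real.norm_eq_abs, abs_of_pos hupos, inv_mul_eq_div]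
          apply le_of_eq
          apply (hg₀one (u⁻¹ • x) _ _).symm
          · rw [hn, le_div_iff₀ hupos]; linarith
          · rw [hn, div_le_iff₀ hupos]; linarith
        · rw [Set.indicator_of_notMem hx]; exact hg₀nn _
    have hcp : (0:ℝ) < u^α * L u := mul_pos (Real.rpow_pos_of_pos hupos α) (hLpos u hupos)
    calc u^α * L u * (μ {x : EuclideanSpace ℝ (Fin d) | u ≤ ‖x‖ ∧ ‖x‖ < 2*u}).toReal
        ≤ u^α * L u * ∫ x, g₀ (u⁻¹ • x) ∂μ := mul_le_mul_of_nonneg_left hcomp hcp.le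
    _ ≤ c₀ + 1 := h1
  -- dyadic-with-ratio annulus bound
  set ρ : ℝ := (2:ℝ)^(-α) / (1 - ε) with hρd
  have hρ0 : 0 < ρ := div_pos h2a (by linarith)
  have hρ1 : ρ < 1 := (div_lt_one (by linarith)).2 hε1
  set T₁ : ℝ := max T₀ Tr with hT₁d
  have hT₁1 : (1:ℝ) ≤ T₁ := le_trans hTr1 (le_max_right _ _)
  have hpowswap : ∀ (c : ℝ) (j : ℕ), ((2:ℝ)^(j:ℕ)) ^ c = ((2:ℝ)^c)^(j:ℕ) := by
    intro c j
    rw [← Real.rpow_natCast (2:ℝ) j, ← Real.rpow_natCast ((2:ℝ)^c) j,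
      ← Real.rpow_mul (by norm_num), ← Real.rpow_mul (by norm_num), mul_comm]
  have hannj : ∀ t, T₁ ≤ t → ∀ j : ℕ,
      t^α * L t * (μ {x : EuclideanSpace ℝ (Fin d) |
        t*2^j ≤ ‖x‖ ∧ ‖x‖ < t*2^(j+1)}).toReal ≤ (c₀+1) * ρ^j := by
    intro t ht j
    have htT₀ : T₀ ≤ t := le_trans (le_max_left _ _) ht
    have htTr : Tr ≤ t := le_trans (le_max_right _ _) ht
    have ht1 : (1:ℝ) ≤ t := le_trans hT₁1 ht
    have htpos : (0:ℝ) < t := by linarith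
    have hu : T₀ ≤ t * 2^j :=
      le_trans htT₀ (le_mul_of_one_le_right (by linarith) (one_le_pow₀ one_le_two))
    have h1 := hannb (t * 2^j) hu
    have hset : {x : EuclideanSpace ℝ (Fin d) | t*2^j ≤ ‖x‖ ∧ ‖x‖ < 2*(t*2^j)}
        = {x : EuclideanSpace ℝ (Fin d) | t*2^j ≤ ‖x‖ ∧ ‖x‖ < t*2^(j+1)} := by
      ext x
      rw [show 2*(t*2^j) = t*2^(j+1) by ring]
    rw [hset] at h1
    have hpowα : (t * (2:ℝ)^j)^α = t^α * ((2:ℝ)^α)^j := by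
      rw [Real.mul_rpow htpos.le (by positivity), hpowswap α j]
    have hLu : (1-ε)^j * L t ≤ L (t * 2^j) := by
      have := (hchain j t htTr).1
      rwa [mul_comm ((2:ℝ)^j) t] at this
    set Aq : ℝ := (μ {x : EuclideanSpace ℝ (Fin d) | t*2^j ≤ ‖x‖ ∧ ‖x‖ < t*2^(j+1)}).toReal
      with hAq
    have hAnn : 0 ≤ Aq := ENNReal.toReal_nonneg
    have hid : ρ^j * (((2:ℝ)^α)^j * (1-ε)^j) = 1 := by
      rw [← mul_pow, ← mul_pow]
      rw [show ρ * ((2:ℝ)^α * (1-ε)) = 1 by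
        have h2 : (2:ℝ)^(-α) * (2:ℝ)^α = 1 := by
          rw [← Real.rpow_add (by norm_num)]; simp
        have hne : (1:ℝ) - ε ≠ 0 := by linarith
        have h3 : ρ * ((2:ℝ)^α * (1-ε)) = ((2:ℝ)^(-α) * (2:ℝ)^α) * ((1-ε) / (1-ε)) := by
          rw [hρd]; ring
        rw [h3, h2, div_self hne, mul_one]]
      exact one_pow j
    have heq : t^α * L t * Aq = ρ^j * ((t*2^j)^α * ((1-ε)^j * L t) * Aq) := by
      have h3 : ρ^j * ((t*2^j)^α * ((1-ε)^j * L t) * Aq)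
          = (ρ^j * (((2:ℝ)^α)^j * (1-ε)^j)) * (t^α * L t * Aq) := by
        rw [hpowα]; ring
      rw [h3, hid, one_mul]
    have hle1 : (t*2^j)^α * ((1-ε)^j * L t) * Aq ≤ (t*2^j)^α * L (t*2^j) * Aq := by
      apply mul_le_mul_of_nonneg_right _ hAnn
      exact mul_le_mul_of_nonneg_left hLu (Real.rpow_nonneg (by positivity) α)
    calc t^α * L t * Aq = ρ^j * ((t*2^j)^α * ((1-ε)^j * L t) * Aq) := heq
    _ ≤ ρ^j * ((t*2^j)^α * L (t*2^j) * Aq) :=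
        mul_le_mul_of_nonneg_left hle1 (pow_nonneg hρ0.le j)
    _ ≤ ρ^j * (c₀+1) := mul_le_mul_of_nonneg_left h1 (pow_nonneg hρ0.le j)
    _ = (c₀+1) * ρ^j := mul_comm _ _
  have hC₀nn : (0:ℝ) ≤ c₀ + 1 := by linarith
  have hKEY := brei_key μ α L hT₁1 hC₀nn hρ0 hρ1 hLpos hannj
  set C₂ : ℝ := (c₀+1)/(1-ρ) with hC₂d
  have hC₂nn : 0 ≤ C₂ := div_nonneg hC₀nn (by linarith)
  -- KEY-down: upscaled tail bound
  have hKEYdown : ∀ u, T₁ ≤ u → ∀ k : ℕ,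
      ((2:ℝ)^k * u)^α * L ((2:ℝ)^k * u) *
        (μ {x : EuclideanSpace ℝ (Fin d) | u ≤ ‖x‖}).toReal ≤ C₂ * ((2:ℝ)^β)^k := by
    intro u hu k
    have hu1 : (1:ℝ) ≤ u := le_trans hT₁1 hu
    have hupos : (0:ℝ) < u := by linarith
    have htTr : Tr ≤ u := le_trans (le_max_right _ _) hu
    have h0 := hKEY u hu 0
    simp only [pow_zero, mul_one] at h0
    have hpowα : ((2:ℝ)^k * u)^α = ((2:ℝ)^α)^k * u^α := by
      rw [Real.mul_rpow (by positivity) hupos.le, hpowswap α k]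
    have hLle : L ((2:ℝ)^k * u) ≤ (1+ε)^k * L u := (hchain k u htTr).2
    have h2ab : ((2:ℝ)^α)^k * (1+ε)^k ≤ ((2:ℝ)^β)^k := by
      rw [← mul_pow]
      apply pow_le_pow_left₀ (by positivity)
      calc (2:ℝ)^α * (1+ε) ≤ (2:ℝ)^α * (2:ℝ)^(β-α) := by
            apply mul_le_mul_of_nonneg_left hε2 (Real.rpow_nonneg (by norm_num) α)
      _ = (2:ℝ)^β := by rw [← Real.rpow_add (by norm_num)]; ring_nf
    set Aq : ℝ := (μ {x : EuclideanSpace ℝ (Fin d) | u ≤ ‖x‖}).toReal with hAqd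
    have hAnn : 0 ≤ Aq := ENNReal.toReal_nonneg
    have hLu : 0 < L u := hLpos u hupos
    have huα : 0 ≤ u^α := Real.rpow_nonneg hupos.le α
    have h2αk : (0:ℝ) ≤ ((2:ℝ)^α)^k := by positivity
    calc ((2:ℝ)^k * u)^α * L ((2:ℝ)^k * u) * Aq
        = ((2:ℝ)^α)^k * (u^α * L ((2:ℝ)^k * u) * Aq) := by rw [hpowα]; ring
    _ ≤ ((2:ℝ)^α)^k * (u^α * ((1+ε)^k * L u) * Aq) := by
        apply mul_le_mul_of_nonneg_left _ h2αk
        apply mul_le_mul_of_nonneg_right _ hAnn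
        exact mul_le_mul_of_nonneg_left hLle huα
    _ = (((2:ℝ)^α)^k * (1+ε)^k) * (u^α * L u * Aq) := by ring
    _ ≤ ((2:ℝ)^β)^k * C₂ := by
        apply mul_le_mul h2ab h0 _ (by positivity)
        exact mul_nonneg (mul_nonneg huα hLu.le) hAnn
    _ = C₂ * ((2:ℝ)^β)^k := mul_comm _ _
  -- tail threshold bound in terms of ‖a‖
  set T₅ : ℝ := max T₁ T₄ with hT₅d
  have hT₅1 : (1:ℝ) ≤ T₅ := le_trans hT₁1 (le_max_left _ _)
  set C₅ : ℝ := max C₂ (max (C₂ * (2:ℝ)^β / δ^β) (C₄ * (2*T₁/δ)^β)) with hC₅d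
  have hC₅nn : 0 ≤ C₅ := le_trans hC₂nn (le_max_left _ _)
  have htailmono : ∀ s s' : ℝ, s ≤ s' →
      (μ {x : EuclideanSpace ℝ (Fin d) | s' ≤ ‖x‖}).toReal
        ≤ (μ {x : EuclideanSpace ℝ (Fin d) | s ≤ ‖x‖}).toReal := fun s s' hss =>
    ENNReal.toReal_mono (measure_ne_top _ _) (measure_mono fun x hx => le_trans hss hx)
  have htail5 : ∀ t, T₅ ≤ t → ∀ a : EuclideanSpace ℝ (Fin d) →L[ℝ] EuclideanSpace ℝ (Fin d),
      a ≠ 0 → t^α * L t * (μ {x : EuclideanSpace ℝ (Fin d) | t * δ / ‖a‖ ≤ ‖x‖}).toReal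
        ≤ C₅ * (1 + ‖a‖^β) := by
    intro t ht a ha
    have htT₁ : T₁ ≤ t := le_trans (le_max_left _ _) ht
    have htT₄ : T₄ ≤ t := le_trans (le_max_right _ _) ht
    have ht1 : (1:ℝ) ≤ t := le_trans hT₅1 ht
    have htpos : (0:ℝ) < t := by linarith
    have hna : 0 < ‖a‖ :=
      lt_of_le_of_ne (norm_nonneg a) (fun h => ha (norm_eq_zero.1 h.symm))
    have hcp : (0:ℝ) < t^α * L t := mul_pos (Real.rpow_pos_of_pos htpos α) (hLpos t htpos)
    have haβ : (0:ℝ) ≤ ‖a‖^β := Real.rpow_nonneg (norm_nonneg a) β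
    have h1a : (1:ℝ) ≤ 1 + ‖a‖^β := by linarith
    by_cases hcase : ‖a‖ ≤ δ
    · have hth : t ≤ t*δ/‖a‖ := by
        rw [le_div_iff₀ hna]
        exact mul_le_mul_of_nonneg_left hcase htpos.le |>.trans_eq (by ring) |>.trans_eq' (by ring)
      have h2 := hKEY t htT₁ 0
      simp only [pow_zero, mul_one] at h2
      calc t^α * L t * (μ {x : EuclideanSpace ℝ (Fin d) | t*δ/‖a‖ ≤ ‖x‖}).toReal
          ≤ t^α * L t * (μ {x : EuclideanSpace ℝ (Fin d) | t ≤ ‖x‖}).toReal :=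
            mul_le_mul_of_nonneg_left (htailmono _ _ hth) hcp.le
      _ ≤ C₂ * 1 := by rw [mul_one]; exact h2
      _ ≤ C₅ * (1 + ‖a‖^β) :=
            mul_le_mul (le_max_left _ _) h1a zero_le_one hC₅nn
    · push_neg at hcase
      have hr1 : (1:ℝ) ≤ ‖a‖/δ := le_of_lt ((one_lt_div hδpos).2 hcase)
      obtain ⟨k', hk'1, hk'2⟩ := exists_nat_pow_near hr1 (by norm_num : (1:ℝ) < 2)
      have hk1 : ‖a‖/δ < (2:ℝ)^(k'+1) := hk'2
      have hk2 : (2:ℝ)^(k'+1) ≤ 2*(‖a‖/δ) := by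
        rw [pow_succ]
        calc (2:ℝ)^k' * 2 ≤ (‖a‖/δ) * 2 := mul_le_mul_of_nonneg_right hk'1 (by norm_num)
        _ = 2*(‖a‖/δ) := mul_comm _ _
      have hthr : t/(2:ℝ)^(k'+1) ≤ t*δ/‖a‖ := by
        rw [div_le_div_iff₀ (by positivity) hna]
        calc t * ‖a‖ = t * δ * (‖a‖/δ) := by
              rw [show t * δ * (‖a‖/δ) = t * ‖a‖ * (δ/δ) from by ring,
                div_self (ne_of_gt hδpos), mul_one]
        _ ≤ t * δ * (2:ℝ)^(k'+1) := by
              apply mul_le_mul_of_nonneg_left hk1.le (by positivity)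
      have hba : ((2:ℝ)^β)^(k'+1) ≤ (2:ℝ)^β * ‖a‖^β / δ^β := by
        rw [← hpowswap β (k'+1)]
        calc ((2:ℝ)^(k'+1):ℝ)^β ≤ (2*(‖a‖/δ))^β :=
              Real.rpow_le_rpow (by positivity) hk2 hβpos.le
        _ = (2:ℝ)^β * (‖a‖/δ)^β := Real.mul_rpow (by norm_num) (by positivity)
        _ = (2:ℝ)^β * (‖a‖^β / δ^β) := by
              rw [Real.div_rpow (norm_nonneg a) hδpos.le]
        _ = (2:ℝ)^β * ‖a‖^β / δ^β := by ring
      by_cases hucase : T₁ ≤ t/(2:ℝ)^(k'+1)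
      · have hd := hKEYdown (t/(2:ℝ)^(k'+1)) hucase (k'+1)
        rw [show (2:ℝ)^(k'+1) * (t/(2:ℝ)^(k'+1)) = t by field_simp] at hd
        calc t^α * L t * (μ {x : EuclideanSpace ℝ (Fin d) | t*δ/‖a‖ ≤ ‖x‖}).toReal
            ≤ t^α * L t * (μ {x : EuclideanSpace ℝ (Fin d) | t/(2:ℝ)^(k'+1) ≤ ‖x‖}).toReal :=
              mul_le_mul_of_nonneg_left (htailmono _ _ hthr) hcp.le
        _ ≤ C₂ * ((2:ℝ)^β)^(k'+1) := hd
        _ ≤ C₂ * ((2:ℝ)^β * ‖a‖^β / δ^β) := mul_le_mul_of_nonneg_left hba hC₂nn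
        _ = (C₂ * (2:ℝ)^β / δ^β) * ‖a‖^β := by ring
        _ ≤ C₅ * (1 + ‖a‖^β) := by
              apply mul_le_mul (le_trans (le_max_left _ _) (le_max_right _ _)) (by linarith)
                haβ hC₅nn
      · push_neg at hucase
        have htb : t ≤ T₁ * (2*(‖a‖/δ)) := by
          rw [div_lt_iff₀ (by positivity)] at hucase
          calc t ≤ T₁ * (2:ℝ)^(k'+1) := by linarith [mul_comm T₁ ((2:ℝ)^(k'+1))]
          _ ≤ T₁ * (2*(‖a‖/δ)) := mul_le_mul_of_nonneg_left hk2 (by linarith)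
        have htail1 : (μ {x : EuclideanSpace ℝ (Fin d) | t*δ/‖a‖ ≤ ‖x‖}).toReal ≤ 1 := by
          calc (μ {x : EuclideanSpace ℝ (Fin d) | t*δ/‖a‖ ≤ ‖x‖}).toReal
              ≤ (μ Set.univ).toReal :=
                ENNReal.toReal_mono (measure_ne_top _ _) (measure_mono (Set.subset_univ _))
          _ = 1 := by simp
        have hgrow := hT₄ t htT₄
        have htβ : t^α * L t ≤ C₄ * t^β := by
          calc t^α * L t ≤ t^α * (C₄ * t^(β-α)) :=
                mul_le_mul_of_nonneg_left hgrow (Real.rpow_nonneg htpos.le α)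
          _ = C₄ * (t^α * t^(β-α)) := by ring
          _ = C₄ * t^β := by rw [← Real.rpow_add htpos]; ring_nf
        have htββ : t^β ≤ (2*T₁/δ)^β * ‖a‖^β := by
          calc t^β ≤ (T₁ * (2*(‖a‖/δ)))^β := Real.rpow_le_rpow htpos.le htb hβpos.le
          _ = ((2*T₁/δ) * ‖a‖)^β := by rw [show T₁ * (2*(‖a‖/δ)) = (2*T₁/δ) * ‖a‖ from by ring]
          _ = (2*T₁/δ)^β * ‖a‖^β := Real.mul_rpow (by positivity) (norm_nonneg a)
        calc t^α * L t * (μ {x : EuclideanSpace ℝ (Fin d) | t*δ/‖a‖ ≤ ‖x‖}).toReal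
            ≤ t^α * L t * 1 := mul_le_mul_of_nonneg_left htail1 hcp.le
        _ = t^α * L t := mul_one _
        _ ≤ C₄ * t^β := htβ
        _ ≤ C₄ * ((2*T₁/δ)^β * ‖a‖^β) := mul_le_mul_of_nonneg_left htββ hC₄.le
        _ = (C₄ * (2*T₁/δ)^β) * ‖a‖^β := by ring
        _ ≤ C₅ * (1 + ‖a‖^β) := by
              apply mul_le_mul (le_trans (le_max_right _ _) (le_max_right _ _)) (by linarith)
                haβ hC₅nn
  -- pointwise limit for every matrix a
  have hptw : ∀ a : EuclideanSpace ℝ (Fin d) →L[ℝ] EuclideanSpace ℝ (Fin d),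
      Tendsto (fun t : ℝ => t^α * L t * ∫ x, f (t⁻¹ • a x) ∂μ) atTop
        (𝓝 (∫ x, f (a x) ∂Λ)) :=
    brei_pointwise μ Λ α L β f hfc δ M₀ hδpos hM₀ hfB hf0 hconvμ hT₁1 hC₂nn hρ0 hρ1 hKEY
      hT₅1 htail5 hLpos
  have hGcont : ∀ t : ℝ, Continuous
      (fun a : EuclideanSpace ℝ (Fin d) →L[ℝ] EuclideanSpace ℝ (Fin d) =>
        ∫ x, f (t⁻¹ • a x) ∂μ) := fun t => brei_opcont μ hfc hfB t⁻¹
  set glim : (EuclideanSpace ℝ (Fin d) →L[ℝ] EuclideanSpace ℝ (Fin d)) → ℝ :=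
    fun a => ∫ x, f (a x) ∂Λ with hglimd
  have hglim_sm : StronglyMeasurable glim := by
    apply stronglyMeasurable_of_tendsto (u := (atTop : Filter ℕ))
      (f := fun (n : ℕ) (a : EuclideanSpace ℝ (Fin d) →L[ℝ] EuclideanSpace ℝ (Fin d)) =>
        ((n:ℝ))^α * L n * ∫ x, f (((n:ℝ))⁻¹ • a x) ∂μ)
    · intro n
      exact (continuous_const.mul (hGcont ((n:ℝ)))).stronglyMeasurable
    · rw [tendsto_pi_nhds]
      intro a
      exact (hptw a).comp tendsto_natCast_atTop_atTop
  have hjoint : P.map (fun ω => (A ω, X ω)) = ν.prod μ :=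
    (indepFun_iff_map_prod_eq_prod_map_map hA.aemeasurable hX.aemeasurable).1 hAX
  have hbilin : ∀ t : ℝ, Continuous
      (fun p : (EuclideanSpace ℝ (Fin d) →L[ℝ] EuclideanSpace ℝ (Fin d)) ×
        EuclideanSpace ℝ (Fin d) => f (t⁻¹ • p.1 p.2)) := by
    intro t
    apply hfc.comp
    exact (isBoundedBilinearMap_apply.continuous).const_smul t⁻¹
  have hLHS : ∀ t : ℝ, ∫ ω, f (t⁻¹ • (A ω) (X ω)) ∂P
      = ∫ a, ∫ x, f (t⁻¹ • a x) ∂μ ∂ν := by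
    intro t
    have hint : Integrable
        (fun p : (EuclideanSpace ℝ (Fin d) →L[ℝ] EuclideanSpace ℝ (Fin d)) ×
          EuclideanSpace ℝ (Fin d) => f (t⁻¹ • p.1 p.2)) (ν.prod μ) :=
      brei_integrable_bdd _ (hbilin t).aestronglyMeasurable (fun p => hfB _)
    have h1 : ∫ ω, f (t⁻¹ • (A ω) (X ω)) ∂P
        = ∫ p, f (t⁻¹ • p.1 p.2) ∂(P.map (fun ω => (A ω, X ω))) :=
      (integral_map (hA.prodMk hX).aemeasurable (hbilin t).aestronglyMeasurable).symm
    rw [h1, hjoint, integral_prod _ hint]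
  have hRHS : ∫ ω, ∫ x, f ((A ω) x) ∂Λ ∂P = ∫ a, glim a ∂ν := by
    rw [hνd]
    exact (integral_map hA.aemeasurable hglim_sm.aestronglyMeasurable).symm
  have hbound : ∀ t : ℝ, T₅ ≤ t → ∀ a : EuclideanSpace ℝ (Fin d) →L[ℝ] EuclideanSpace ℝ (Fin d),
      ‖t^α * L t * ∫ x, f (t⁻¹ • a x) ∂μ‖ ≤ M₀ * (C₅ * (1 + ‖a‖^β)) := by
    intro t ht a
    have ht1 : (1:ℝ) ≤ t := le_trans hT₅1 ht
    have htpos : (0:ℝ) < t := by linarith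
    have hcp : (0:ℝ) < t^α * L t := mul_pos (Real.rpow_pos_of_pos htpos α) (hLpos t htpos)
    rcases eq_or_ne a 0 with rfl | ha
    · have hz : ∀ x : EuclideanSpace ℝ (Fin d),
          f (t⁻¹ • (0 : EuclideanSpace ℝ (Fin d) →L[ℝ] EuclideanSpace ℝ (Fin d)) x) = 0 := by
        intro x
        simp only [ContinuousLinearMap.zero_apply, smul_zero]
        exact hf0 0 (by simpa using hδpos)
      have h0 : (∫ x, f (t⁻¹ • (0 : EuclideanSpace ℝ (Fin d) →L[ℝ]
          EuclideanSpace ℝ (Fin d)) x) ∂μ) = 0 := by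
        rw [integral_congr_ae (ae_of_all _ hz), integral_zero]
      rw [h0, mul_zero, norm_zero]
      have : (0:ℝ) ≤ ‖(0 : EuclideanSpace ℝ (Fin d) →L[ℝ] EuclideanSpace ℝ (Fin d))‖^β :=
        Real.rpow_nonneg (norm_nonneg _) β
      exact mul_nonneg hM₀ (mul_nonneg hC₅nn (by linarith))
    · have hna : 0 < ‖a‖ :=
        lt_of_le_of_ne (norm_nonneg a) (fun h => ha (norm_eq_zero.1 h.symm))
      have hsupp : ∀ x : EuclideanSpace ℝ (Fin d), f (t⁻¹ • a x) ≠ 0 → t * δ / ‖a‖ ≤ ‖x‖ := by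
        intro x hx
        have h1 : δ ≤ ‖t⁻¹ • a x‖ := by
          by_contra hcon
          exact hx (hf0 _ (not_le.1 hcon))
        have hn : ‖t⁻¹ • a x‖ = ‖a x‖ / t := by
          rw [norm_smul, norm_inv, Real.norm_eq_abs, abs_of_pos htpos, inv_mul_eq_div]
        rw [hn, le_div_iff₀ htpos] at h1
        have h3 : ‖a x‖ ≤ ‖a‖ * ‖x‖ := a.le_opNorm x
        rw [div_le_iff₀ hna]
        nlinarith [mul_comm ‖a‖ ‖x‖]
      have hcont : Continuous fun x : EuclideanSpace ℝ (Fin d) => f (t⁻¹ • a x) :=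
        hfc.comp ((a.continuous).const_smul t⁻¹)
      have hb := brei_int_tail_bound μ hcont (fun x => hfB _) hsupp
      rw [Real.norm_eq_abs, abs_mul, abs_of_pos hcp]
      calc (t^α * L t) * |∫ x, f (t⁻¹ • a x) ∂μ|
          ≤ (t^α * L t) * (M₀ * (μ {x : EuclideanSpace ℝ (Fin d) | t*δ/‖a‖ ≤ ‖x‖}).toReal) :=
            mul_le_mul_of_nonneg_left hb hcp.le
      _ = M₀ * ((t^α * L t) * (μ {x : EuclideanSpace ℝ (Fin d) | t*δ/‖a‖ ≤ ‖x‖}).toReal) := by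
            ring
      _ ≤ M₀ * (C₅ * (1 + ‖a‖^β)) := mul_le_mul_of_nonneg_left (htail5 t ht a ha) hM₀
  have hIβ : Integrable
      (fun a : EuclideanSpace ℝ (Fin d) →L[ℝ] EuclideanSpace ℝ (Fin d) => ‖a‖^β) ν := by
    rw [hνd]
    have hcont : Continuous
        (fun a : EuclideanSpace ℝ (Fin d) →L[ℝ] EuclideanSpace ℝ (Fin d) => ‖a‖^β) :=
      continuous_norm.rpow_const (fun a => Or.inr hβpos.le)
    exact (integrable_map_measure hcont.aestronglyMeasurable hA.aemeasurable).2 hAmom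
  have hIbound : Integrable
      (fun a : EuclideanSpace ℝ (Fin d) →L[ℝ] EuclideanSpace ℝ (Fin d) =>
        M₀ * (C₅ * (1 + ‖a‖^β))) ν := by
    apply Integrable.const_mul
    apply Integrable.const_mul
    exact (integrable_const 1).add hIβ
  have hmain : Tendsto (fun t : ℝ => ∫ a, (t^α * L t * ∫ x, f (t⁻¹ • a x) ∂μ) ∂ν) atTop
      (𝓝 (∫ a, glim a ∂ν)) := by
    refine tendsto_integral_filter_of_dominated_convergence _ ?_ ?_ hIbound ?_
    · apply Eventually.of_forall
      intro t
      exact (continuous_const.mul (hGcont t)).aestronglyMeasurable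
    · rw [eventually_atTop]
      exact ⟨T₅, fun t ht => ae_of_all _ fun a => hbound t ht a⟩
    · exact ae_of_all _ fun a => hptw a
  have hfuneq : ∀ t : ℝ, ∫ a, (t^α * L t * ∫ x, f (t⁻¹ • a x) ∂μ) ∂ν
      = t^α * L t * ∫ ω, f (t⁻¹ • (A ω) (X ω)) ∂P := by
    intro t
    rw [integral_const_mul, hLHS t]
  rw [show (∫ ω, ∫ x, f ((A ω) x) ∂Λ ∂P) = ∫ a, glim a ∂ν from hRHS]
  exact hmain.congr hfuneq

end
end

section
/- (Dominating bound in Breiman's lemma.) Let $X$ be an $\alpha$-regularly varying random vector with slowly varying function $L_b$, bounded away from zero and infinity on compacts, so that $\sup_{t>0}t^{\alpha}L_b(t)\mathbb{P}[|X|>t]<\infty$. Let $A$ be a random matrix with $\mathbb{E}\|A\|^{\beta}<\infty$, $\beta>\alpha$, independent of $X$. Then for any bounded measurable $f$ supported in $\{|x|>\eta\}$, $\eta>0$, there is a measurable function $g$ of $A$ with $\mathbb{E}[g(A)]<\infty$ such that almost surely $\sup_{t>0}\,t^{\alpha}L_b(t)\,\mathbb{E}[f(t^{-1}AX)\,|\,A]\le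 g(A)$. -/
open MeasureTheory ProbabilityTheory Filter Topology

noncomputable section

/-- Auxiliary Potter-type bound for the regular-variation part of Breiman's lemma. -/
lemma breiman_keyA {α δ : ℝ} (hα : 0 < α) (hδ : 0 < δ) (L : ℝ → ℝ)
    (hLslow : ∀ l : ℝ, 0 < l → Tendsto (fun t => L (l * t) / L t) atTop (𝓝 1))
    (hLbdd : ∀ a b : ℝ, 0 < a →
      ∃ m M : ℝ, 0 < m ∧ ∀ t ∈ Set.Icc a b, m ≤ L t ∧ L t ≤ M)
    (p : ℝ → ℝ) (hp0 : ∀ s, 0 ≤ p s) (hp1 : ∀ s, p s ≤ 1) (hpa : Antitone p)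
    (M : ℝ) (hsup : ∀ t : ℝ, 0 < t → t ^ α * L t * p t ≤ M)
    (η : ℝ) (hη : 0 < η) :
    ∃ C : ℝ, 0 ≤ C ∧ ∀ n : ℕ, ∀ t : ℝ, 0 < t →
      t ^ α * L t * p (((2:ℝ) ^ n)⁻¹ * η * t) ≤ C * ((2:ℝ) ^ (α + δ)) ^ n := by
  have hL0 : ∀ t : ℝ, 0 < t → 0 < L t := by
    intro t ht
    obtain ⟨m, M', hm, h⟩ := hLbdd t t ht
    exact hm.trans_le (h t ⟨le_rfl, le_rfl⟩).1
  by_cases hdeg : ∀ s : ℝ, 0 < s → p s = 0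
  · refine ⟨0, le_rfl, fun n t ht => ?_⟩
    have hspos : (0:ℝ) < ((2:ℝ) ^ n)⁻¹ * η * t := by positivity
    rw [hdeg _ hspos, mul_zero, zero_mul]
  · push_neg at hdeg
    obtain ⟨s₀, hs₀pos, hps₀⟩ := hdeg
    have hp₀ : 0 < p s₀ := lt_of_le_of_ne (hp0 s₀) (Ne.symm hps₀)
    set κ : ℝ := (2:ℝ) ^ δ with hκdef
    have hκ1 : 1 < κ :=
      Real.one_lt_rpow_iff_of_pos (by norm_num) |>.mpr (Or.inl ⟨one_lt_two, hδ⟩)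
    have hκ0 : 0 < κ := lt_trans one_pos hκ1
    -- doubling step
    obtain ⟨T₂, hT₂⟩ := eventually_atTop.mp (((hLslow 2 two_pos).eventually_lt_const hκ1))
    obtain ⟨Tη, hTη⟩ := eventually_atTop.mp
      (((hLslow η⁻¹ (inv_pos.mpr hη)).eventually_lt_const one_lt_two))
    set T0 : ℝ := max (max T₂ Tη) (max s₀ 1) with hT0def
    have hT0pos : (0:ℝ) < T0 :=
      lt_of_lt_of_le one_pos ((le_max_right s₀ 1).trans (le_max_right _ _))
    have hT0s₀ : s₀ ≤ T0 := (le_max_left s₀ 1).trans (le_max_right _ _)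
    have hdbl : ∀ t : ℝ, T0 ≤ t → L (2 * t) ≤ κ * L t := by
      intro t ht
      have htpos : 0 < t := lt_of_lt_of_le hT0pos ht
      have h := hT₂ t (le_trans ((le_max_left T₂ Tη).trans (le_max_left _ _)) ht)
      exact ((div_lt_iff₀ (hL0 t htpos)).mp h).le
    have hηstep : ∀ t : ℝ, T0 ≤ t → L (η⁻¹ * t) ≤ 2 * L t := by
      intro t ht
      have htpos : 0 < t := lt_of_lt_of_le hT0pos ht
      have h := hTη t (le_trans ((le_max_right T₂ Tη).trans (le_max_left _ _)) ht)
      exact ((div_lt_iff₀ (hL0 t htpos)).mp h).le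
    have hchain : ∀ s : ℝ, T0 ≤ s → ∀ n : ℕ, L ((2:ℝ) ^ n * s) ≤ κ ^ n * L s := by
      intro s hs n
      have hspos : 0 < s := lt_of_lt_of_le hT0pos hs
      induction n with
      | zero => simp
      | succ k ih =>
        have h2k : T0 ≤ (2:ℝ) ^ k * s := by
          refine hs.trans ?_
          nlinarith [one_le_pow₀ (a := (2:ℝ)) (n := k) one_le_two]
        have : L ((2:ℝ) ^ (k+1) * s) = L (2 * ((2:ℝ) ^ k * s)) := by ring_nf
        rw [this]
        calc L (2 * ((2:ℝ) ^ k * s)) ≤ κ * L ((2:ℝ) ^ k * s) := hdbl _ h2k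
          _ ≤ κ * (κ ^ k * L s) := mul_le_mul_of_nonneg_left ih hκ0.le
          _ = κ ^ (k+1) * L s := by ring
    obtain ⟨m₁, M₁, hm₁, hbnd⟩ := hLbdd s₀ (2 * T0) hs₀pos
    have hM₁pos : 0 < M₁ := by
      have h := hbnd s₀ ⟨le_rfl, by linarith⟩
      linarith [h.1, h.2]
    have hgrow : ∀ n : ℕ, ∀ u : ℝ, s₀ ≤ u → u ≤ (2:ℝ) ^ n * (2 * T0) → L u ≤ M₁ * κ ^ n := by
      intro n
      induction n with
      | zero => intro u h1 h2; simpa using (hbnd u ⟨h1, by simpa using h2⟩).2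
      | succ k ih =>
        intro u h1 h2
        by_cases hc : u ≤ (2:ℝ) ^ k * (2 * T0)
        · refine (ih u h1 hc).trans ?_
          have hκk : (κ:ℝ) ^ k ≤ κ ^ (k+1) := by
            calc κ ^ k = 1 * κ ^ k := by ring
              _ ≤ κ * κ ^ k := by nlinarith [pow_pos hκ0 k]
              _ = κ ^ (k+1) := by ring
          nlinarith [pow_pos hκ0 k]
        · push_neg at hc
          have hpk : (1:ℝ) ≤ (2:ℝ) ^ k := one_le_pow₀ one_le_two
          have hu2T : 2 * T0 ≤ u := by nlinarith
          have hu2 : T0 ≤ u / 2 := by linarith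
          have hs₀u2 : s₀ ≤ u / 2 := hT0s₀.trans hu2
          have hueq : L u = L (2 * (u / 2)) := by ring_nf
          rw [hueq]
          calc L (2 * (u/2)) ≤ κ * L (u/2) := hdbl _ hu2
            _ ≤ κ * (M₁ * κ ^ k) := by
                refine mul_le_mul_of_nonneg_left (ih (u/2) hs₀u2 ?_) hκ0.le
                rw [pow_succ] at h2; linarith
            _ = M₁ * κ ^ (k+1) := by ring
    obtain ⟨m, hm⟩ := pow_unbounded_of_one_lt (η⁻¹) (one_lt_two (α := ℝ))
    have hηm : η⁻¹ ≤ (2:ℝ) ^ m := hm.le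
    set MM : ℝ := max M 1 with hMMdef
    have hMM1 : (1:ℝ) ≤ MM := le_max_right _ _
    have hMM0 : (0:ℝ) < MM := lt_of_lt_of_le one_pos hMM1
    set ρ : ℝ := (2:ℝ) ^ (α + δ) with hρdef
    have hρeq : ρ = (2:ℝ) ^ α * κ := Real.rpow_add two_pos α δ
    have h2α0 : (0:ℝ) < (2:ℝ) ^ α := Real.rpow_pos_of_pos two_pos α
    have hρ1 : (1:ℝ) ≤ ρ := Real.one_le_rpow one_le_two (by linarith)
    have hρn1 : ∀ n : ℕ, (1:ℝ) ≤ ρ ^ n := fun n => one_le_pow₀ hρ1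
    have hρpow : ∀ n : ℕ, ρ ^ n = ((2:ℝ) ^ α) ^ n * κ ^ n := by
      intro n; rw [hρeq, mul_pow]
    have hpow_rpow : ∀ n : ℕ, ((2:ℝ) ^ n : ℝ) ^ α = ((2:ℝ) ^ α) ^ n := by
      intro n
      rw [← Real.rpow_natCast 2 n, ← Real.rpow_natCast ((2:ℝ) ^ α) n,
        ← Real.rpow_mul (by norm_num), ← Real.rpow_mul (by norm_num), mul_comm]
    set C : ℝ := max (max (η⁻¹ ^ α * (2 * MM)) (MM / p s₀)) ((η⁻¹ * T0) ^ α * (M₁ * κ ^ m))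
      with hCdef
    have hC0 : 0 ≤ C := by
      have h : (0:ℝ) ≤ MM / p s₀ := le_of_lt (div_pos hMM0 hp₀)
      exact h.trans ((le_max_right _ _).trans (le_max_left _ _))
    refine ⟨C, hC0, fun n t ht => ?_⟩
    set s : ℝ := ((2:ℝ) ^ n)⁻¹ * η * t with hsdef
    have h2n : (0:ℝ) < (2:ℝ) ^ n := by positivity
    have hspos : 0 < s := by positivity
    have hteq : t = η⁻¹ * ((2:ℝ) ^ n * s) := by
      rw [hsdef]; field_simp
    have ht2ns : s ≤ (2:ℝ) ^ n * s := by
      nlinarith [one_le_pow₀ (a := (2:ℝ)) (n := n) one_le_two]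
    by_cases hcase : T0 ≤ s
    · -- case 1 : s large
      have h2ns : T0 ≤ (2:ℝ) ^ n * s := hcase.trans ht2ns
      have hLt : L t ≤ 2 * (κ ^ n * L s) := by
        rw [hteq]
        calc L (η⁻¹ * ((2:ℝ) ^ n * s)) ≤ 2 * L ((2:ℝ) ^ n * s) := hηstep _ h2ns
          _ ≤ 2 * (κ ^ n * L s) :=
              mul_le_mul_of_nonneg_left (hchain s hcase n) (by norm_num)
      have htα : t ^ α = η⁻¹ ^ α * ((2:ℝ) ^ α) ^ n * s ^ α := by
        rw [hteq, Real.mul_rpow (by positivity) (by positivity),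
          Real.mul_rpow (by positivity) (by positivity), hpow_rpow n, mul_assoc]
      have hsLp : s ^ α * L s * p s ≤ MM := (hsup s hspos).trans (le_max_left _ _)
      have htα0 : (0:ℝ) ≤ t ^ α := Real.rpow_nonneg ht.le α
      calc t ^ α * L t * p s ≤ t ^ α * (2 * (κ ^ n * L s)) * p s :=
            mul_le_mul_of_nonneg_right
              (mul_le_mul_of_nonneg_left hLt htα0) (hp0 s)
        _ = (η⁻¹ ^ α * 2) * (((2:ℝ) ^ α) ^ n * κ ^ n) * (s ^ α * L s * p s) := by
            rw [htα]; ring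
        _ ≤ (η⁻¹ ^ α * 2) * (((2:ℝ) ^ α) ^ n * κ ^ n) * MM := by
            refine mul_le_mul_of_nonneg_left hsLp ?_
            positivity
        _ = (η⁻¹ ^ α * (2 * MM)) * ρ ^ n := by rw [hρpow n]; ring
        _ ≤ C * ρ ^ n := by
            refine mul_le_mul_of_nonneg_right ?_ (by positivity)
            exact (le_max_left _ _).trans (le_max_left _ _)
    · push_neg at hcase
      by_cases hts : t ≤ s₀
      · -- case 2a : t small
        have hpt : p s₀ ≤ p t := hpa hts
        have h1 : t ^ α * L t * p s₀ ≤ MM := by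
          calc t ^ α * L t * p s₀ ≤ t ^ α * L t * p t := by
                refine mul_le_mul_of_nonneg_left hpt ?_
                have := (hL0 t ht).le
                positivity
            _ ≤ M := hsup t ht
            _ ≤ MM := le_max_left _ _
        have h2 : t ^ α * L t ≤ MM / p s₀ := (le_div_iff₀ hp₀).mpr h1
        calc t ^ α * L t * p s ≤ (MM / p s₀) * 1 := by
              refine mul_le_mul h2 (hp1 s) (hp0 s) ?_
              exact le_of_lt (div_pos hMM0 hp₀)
          _ = MM / p s₀ := mul_one _
          _ ≤ C * 1 := by
              rw [mul_one]
              exact (le_max_right _ _).trans (le_max_left _ _)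
          _ ≤ C * ρ ^ n := mul_le_mul_of_nonneg_left (hρn1 n) hC0
      · push_neg at hts
        have htub : t ≤ η⁻¹ * ((2:ℝ) ^ n * T0) := by
          rw [hteq]
          have h : (2:ℝ) ^ n * s ≤ (2:ℝ) ^ n * T0 :=
            mul_le_mul_of_nonneg_left hcase.le (by positivity)
          exact mul_le_mul_of_nonneg_left h (by positivity)
        have hL : L t ≤ M₁ * κ ^ (n + m) := by
          refine hgrow (n + m) t hts.le ?_
          calc t ≤ η⁻¹ * ((2:ℝ) ^ n * T0) := htub
            _ ≤ (2:ℝ) ^ m * ((2:ℝ) ^ n * T0) :=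
                mul_le_mul_of_nonneg_right hηm (by positivity)
            _ = (2:ℝ) ^ (n + m) * T0 := by rw [pow_add]; ring
            _ ≤ (2:ℝ) ^ (n + m) * (2 * T0) := by
                have h1 : (0:ℝ) < (2:ℝ) ^ (n+m) := by positivity
                nlinarith
        have htα : t ^ α ≤ (η⁻¹ * T0) ^ α * ((2:ℝ) ^ α) ^ n := by
          have hb : t ≤ (η⁻¹ * T0) * (2:ℝ) ^ n := by
            calc t ≤ η⁻¹ * ((2:ℝ) ^ n * T0) := htub
              _ = (η⁻¹ * T0) * (2:ℝ) ^ n := by ring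
          calc t ^ α ≤ ((η⁻¹ * T0) * (2:ℝ) ^ n) ^ α :=
                Real.rpow_le_rpow ht.le hb hα.le
            _ = (η⁻¹ * T0) ^ α * ((2:ℝ) ^ α) ^ n := by
                rw [Real.mul_rpow (by positivity) (by positivity), hpow_rpow n]
        have hLt0 : (0:ℝ) ≤ L t := (hL0 t ht).le
        have htα0 : (0:ℝ) ≤ t ^ α := Real.rpow_nonneg ht.le α
        calc t ^ α * L t * p s ≤ t ^ α * L t * 1 :=
              mul_le_mul_of_nonneg_left (hp1 s) (by positivity)
          _ = t ^ α * L t := mul_one _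
          _ ≤ ((η⁻¹ * T0) ^ α * ((2:ℝ) ^ α) ^ n) * (M₁ * κ ^ (n + m)) :=
              mul_le_mul htα hL hLt0 (by positivity)
          _ = ((η⁻¹ * T0) ^ α * (M₁ * κ ^ m)) * (((2:ℝ) ^ α) ^ n * κ ^ n) := by
              rw [pow_add]; ring
          _ = ((η⁻¹ * T0) ^ α * (M₁ * κ ^ m)) * ρ ^ n := by rw [hρpow n]
          _ ≤ C * ρ ^ n :=
              mul_le_mul_of_nonneg_right (le_max_right _ _) (by positivity)

/-- Choice of a dyadic scale dominating a given real number. -/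
lemma breiman_exists_pow (c : ℝ) : ∃ n : ℕ, c ≤ 2 ^ n ∧ (2:ℝ) ^ n ≤ 2 * max c 1 := by
  rcases le_or_gt c 1 with h | h
  · refine ⟨0, by simpa using h, ?_⟩
    have h1 : (1:ℝ) ≤ max c 1 := le_max_right c 1
    simpa using by linarith
  · have hex : ∃ n : ℕ, c < 2 ^ n := pow_unbounded_of_one_lt c one_lt_two
    obtain ⟨n, hn1, hn2⟩ : ∃ n : ℕ, c < 2 ^ n ∧ ∀ k < n, ¬ c < 2 ^ k :=
      ⟨Nat.find hex, Nat.find_spec hex, fun k hk => Nat.find_min hex hk⟩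
    cases n with
    | zero => simp at hn1; linarith
    | succ k =>
      have h2k : (2:ℝ) ^ k ≤ c := le_of_not_gt (hn2 k (Nat.lt_succ_self k))
      refine ⟨k + 1, hn1.le, ?_⟩
      have h1 : c ≤ max c 1 := le_max_left c 1
      rw [pow_succ]
      nlinarith

/-- dominating bound in Breiman's lemma: with
`sup_{t>0} t^α L(t) ℙ[|X|>t] < ∞`, `𝔼‖A‖^β < ∞` for `β > α`, `A` independent
of `X`, and `f` bounded measurable supported in `{|x| > η}`, there is a
measurable `g` with `𝔼[g(A)] < ∞` dominating
`t^α L(t) 𝔼[f(t⁻¹ A X) | A]` uniformly in `t > 0`. -/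
theorem breiman_dominating_bound
    {Ω : Type*} [MeasurableSpace Ω] {d : ℕ}
    [MeasurableSpace (EuclideanSpace ℝ (Fin d) →L[ℝ] EuclideanSpace ℝ (Fin d))]
    [BorelSpace (EuclideanSpace ℝ (Fin d) →L[ℝ] EuclideanSpace ℝ (Fin d))]
    (P : Measure Ω) [IsProbabilityMeasure P]
    (X : Ω → EuclideanSpace ℝ (Fin d)) (hX : Measurable X)
    (A : Ω → EuclideanSpace ℝ (Fin d) →L[ℝ] EuclideanSpace ℝ (Fin d))
    (hA : Measurable A)
    (hAX : IndepFun A X P)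
    (α β : ℝ) (hα : 0 < α) (hβ : α < β)
    (hAmom : Integrable (fun ω => ‖A ω‖ ^ β) P)
    (L : ℝ → ℝ)
    (hLslow : ∀ l : ℝ, 0 < l →
      Tendsto (fun t => L (l * t) / L t) atTop (𝓝 1))
    (hLbdd : ∀ a b : ℝ, 0 < a →
      ∃ m M : ℝ, 0 < m ∧ ∀ t ∈ Set.Icc a b, m ≤ L t ∧ L t ≤ M)
    (hsup : ∃ M : ℝ, ∀ t : ℝ, 0 < t →
      t ^ α * L t * (P {ω | t < ‖X ω‖}).toReal ≤ M)
    (f : EuclideanSpace ℝ (Fin d) → ℝ) (hfmeas : Measurable f)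
    (hfbdd : ∃ M : ℝ, ∀ x, |f x| ≤ M)
    (η : ℝ) (hη : 0 < η)
    (hfsupp : ∀ x : EuclideanSpace ℝ (Fin d), ‖x‖ ≤ η → f x = 0) :
    ∃ g : (EuclideanSpace ℝ (Fin d) →L[ℝ] EuclideanSpace ℝ (Fin d)) → ℝ,
      Measurable g ∧ Integrable (fun ω => g (A ω)) P ∧
      ∀ t : ℝ, 0 < t → ∀ᵐ ω ∂P,
        t ^ α * L t *
          (P[(fun ω' => f (t⁻¹ • (A ω') (X ω'))) |
            MeasurableSpace.comap A inferInstance]) ω ≤ g (A ω) := by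
  classical
  obtain ⟨Mf, hMf⟩ := hfbdd
  have hMf0 : 0 ≤ Mf := (abs_nonneg _).trans (hMf 0)
  obtain ⟨M, hM⟩ := hsup
  set p : ℝ → ℝ := fun s => (P {ω | s < ‖X ω‖}).toReal with hpdef
  have hp0 : ∀ s, 0 ≤ p s := fun s => ENNReal.toReal_nonneg
  have hp1 : ∀ s, p s ≤ 1 := by
    intro s
    have h := prob_le_one (μ := P) (s := {ω | s < ‖X ω‖})
    simpa [hpdef] using ENNReal.toReal_mono ENNReal.one_ne_top h
  have hpa : Antitone p := by
    intro s u hsu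
    refine ENNReal.toReal_mono (measure_ne_top P _) (measure_mono ?_)
    intro ω hω; exact lt_of_le_of_lt hsu hω
  set δ : ℝ := (β - α) / 2 with hδdef
  have hδ : 0 < δ := by rw [hδdef]; linarith
  have hαδβ : α + δ ≤ β := by rw [hδdef]; linarith
  have hαδ0 : 0 ≤ α + δ := by linarith
  obtain ⟨C, hC0, hkey⟩ := breiman_keyA hα hδ L hLslow hLbdd p hp0 hp1 hpa M hM η hη
  have hL0 : ∀ t : ℝ, 0 < t → 0 < L t := by
    intro t ht
    obtain ⟨m, M', hm, h⟩ := hLbdd t t ht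
    exact hm.trans_le (h t ⟨le_rfl, le_rfl⟩).1
  -- the dominating function
  set g : (EuclideanSpace ℝ (Fin d) →L[ℝ] EuclideanSpace ℝ (Fin d)) → ℝ :=
    fun a => Mf * C * (2 * max ‖a‖ 1) ^ (α + δ) with hgdef
  have hgcont : Continuous g := by
    rw [hgdef]
    exact continuous_const.mul
      ((continuous_const.mul (continuous_norm.max continuous_const)).rpow_const
        fun a => Or.inr hαδ0)
  have hgmeas : Measurable g := hgcont.measurable
  have hgbound : ∀ a : EuclideanSpace ℝ (Fin d) →L[ℝ] EuclideanSpace ℝ (Fin d),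
      ‖g a‖ ≤ (Mf * C * (2:ℝ) ^ (α + δ)) * (1 + ‖a‖ ^ β) := by
    intro a
    have hga0 : 0 ≤ g a := by rw [hgdef]; positivity
    rw [Real.norm_eq_abs, abs_of_nonneg hga0, hgdef]
    have h1 : (2 * max ‖a‖ 1) ^ (α + δ) = (2:ℝ) ^ (α + δ) * (max ‖a‖ 1) ^ (α + δ) :=
      Real.mul_rpow (by norm_num) (by positivity)
    have h2 : (max ‖a‖ 1) ^ (α + δ) ≤ 1 + ‖a‖ ^ β := by
      rcases le_total ‖a‖ 1 with hc | hc
      · rw [max_eq_right hc, Real.one_rpow]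
        have := Real.rpow_nonneg (norm_nonneg a) β
        linarith
      · rw [max_eq_left hc]
        have h3 : ‖a‖ ^ (α + δ) ≤ ‖a‖ ^ β :=
          Real.rpow_le_rpow_of_exponent_le hc hαδβ
        linarith
    calc Mf * C * (2 * max ‖a‖ 1) ^ (α + δ)
        = (Mf * C * (2:ℝ) ^ (α + δ)) * (max ‖a‖ 1) ^ (α + δ) := by rw [h1]; ring
      _ ≤ (Mf * C * (2:ℝ) ^ (α + δ)) * (1 + ‖a‖ ^ β) :=
          mul_le_mul_of_nonneg_left h2 (by positivity)
  have hgint : Integrable (fun ω => g (A ω)) P := by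
    refine Integrable.mono' (((integrable_const (1:ℝ)).add hAmom).const_mul
      (Mf * C * (2:ℝ) ^ (α + δ))) ((hgmeas.comp hA).aestronglyMeasurable)
      (ae_of_all _ fun ω => ?_)
    exact hgbound (A ω)
  refine ⟨g, hgmeas, hgint, fun t ht => ?_⟩
  have htL : 0 ≤ t ^ α * L t := mul_nonneg (Real.rpow_nonneg ht.le α) (hL0 t ht).le
  -- probabilistic setup
  have hAXapp : Measurable fun ω => (A ω) (X ω) :=
    (isBoundedBilinearMap_apply.continuous.measurable).comp (hA.prodMk hX)
  set μX := P.map X with hμXdef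
  haveI : IsProbabilityMeasure μX := Measure.isProbabilityMeasure_map hX.aemeasurable
  set μA := P.map A with hμAdef
  haveI : IsProbabilityMeasure μA := Measure.isProbabilityMeasure_map hA.aemeasurable
  have hm : MeasurableSpace.comap A inferInstance ≤ (inferInstance : MeasurableSpace Ω) :=
    hA.comap_le
  haveI : SigmaFinite (P.trim hm) := inferInstance
  set S : Set Ω := {ω | t * η < ‖A ω‖ * ‖X ω‖} with hSdef
  have hS : MeasurableSet S := (hA.norm.mul hX.norm) measurableSet_Ioi
  set C2 : Set ((EuclideanSpace ℝ (Fin d) →L[ℝ] EuclideanSpace ℝ (Fin d)) ×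
      EuclideanSpace ℝ (Fin d)) := {q | t * η < ‖q.1‖ * ‖q.2‖} with hC2def
  have hC2 : MeasurableSet C2 := (measurable_fst.norm.mul measurable_snd.norm) measurableSet_Ioi
  have hmeasG0 : Measurable fun a => μX (Prod.mk a ⁻¹' C2) :=
    measurable_measure_prodMk_left hC2
  set G : (EuclideanSpace ℝ (Fin d) →L[ℝ] EuclideanSpace ℝ (Fin d)) → ℝ :=
    fun a => Mf * (μX {x | t * η < ‖a‖ * ‖x‖}).toReal with hGdef
  have hGmeas : Measurable G := (hmeasG0.ennreal_toReal).const_mul Mf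
  set H : Ω → ℝ := S.indicator fun _ => Mf with hHdef
  have hH : Integrable H P := (integrable_const Mf).indicator hS
  have hmap : P.map (fun ω => (A ω, X ω)) = μA.prod μX :=
    (indepFun_iff_map_prod_eq_prod_map_map hA.aemeasurable hX.aemeasurable).mp hAX
  -- the integrand and its domination
  have hfun : Measurable fun ω => f (t⁻¹ • (A ω) (X ω)) :=
    hfmeas.comp (hAXapp.const_smul t⁻¹)
  have hint : Integrable (fun ω => f (t⁻¹ • (A ω) (X ω))) P := by
    refine Integrable.mono' (integrable_const Mf) hfun.aestronglyMeasurable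
      (ae_of_all _ fun ω => ?_)
    rw [Real.norm_eq_abs]; exact hMf _
  have hle : ∀ ω, f (t⁻¹ • (A ω) (X ω)) ≤ H ω := by
    intro ω
    by_cases hω : ω ∈ S
    · rw [hHdef, Set.indicator_of_mem hω]
      exact (le_abs_self _).trans (hMf _)
    · rw [hHdef, Set.indicator_of_notMem hω]
      have hle2 : ‖(A ω) (X ω)‖ ≤ t * η :=
        le_trans (ContinuousLinearMap.le_opNorm _ _) (not_lt.mp hω)
      have hnorm : ‖t⁻¹ • (A ω) (X ω)‖ ≤ η := by
        rw [norm_smul, norm_inv, Real.norm_eq_abs, abs_of_pos ht,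
          inv_mul_le_iff₀ ht]
        exact hle2
      rw [hfsupp _ hnorm]
  have h1 : P[(fun ω' => f (t⁻¹ • (A ω') (X ω'))) | MeasurableSpace.comap A inferInstance]
      ≤ᵐ[P] P[H | MeasurableSpace.comap A inferInstance] :=
    condExp_mono hint hH (ae_of_all _ hle)
  -- freezing lemma via uniqueness of conditional expectation
  have h2 : (fun ω => G (A ω)) =ᵐ[P] P[H | MeasurableSpace.comap A inferInstance] := by
    refine ae_eq_condExp_of_forall_setIntegral_eq hm hH (fun s _ _ => ?_) (fun s hs _ => ?_) ?_
    · refine (Integrable.mono' (integrable_const Mf) ((hGmeas.comp hA).aestronglyMeasurable)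
        (ae_of_all _ fun ω => ?_)).integrableOn
      have hb1 : (μX {x | t * η < ‖A ω‖ * ‖x‖}).toReal ≤ 1 :=
        ENNReal.toReal_mono ENNReal.one_ne_top prob_le_one
      have hb0 : (0:ℝ) ≤ (μX {x | t * η < ‖A ω‖ * ‖x‖}).toReal := ENNReal.toReal_nonneg
      simp only [Function.comp_apply, hGdef, Real.norm_eq_abs]
      rw [abs_mul, abs_of_nonneg hMf0, abs_of_nonneg hb0]
      nlinarith
    · obtain ⟨B, hB, rfl⟩ := hs
      have hD : MeasurableSet ((B ×ˢ Set.univ) ∩ C2) :=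
        (hB.prod MeasurableSet.univ).inter hC2
      have hset : A ⁻¹' B ∩ S = (fun ω => (A ω, X ω)) ⁻¹' ((B ×ˢ Set.univ) ∩ C2) := by
        ext ω
        constructor
        · rintro ⟨h1, h2⟩; exact ⟨⟨h1, trivial⟩, h2⟩
        · rintro ⟨⟨h1, _⟩, h2⟩; exact ⟨h1, h2⟩
      have hsec : (fun a => μX (Prod.mk a ⁻¹' ((B ×ˢ Set.univ) ∩ C2))) =
          B.indicator (fun a => μX (Prod.mk a ⁻¹' C2)) := by
        funext a
        by_cases haB : a ∈ B
        · rw [Set.indicator_of_mem haB]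
          congr 1
          ext x
          constructor
          · rintro ⟨_, hx⟩; exact hx
          · intro hx; exact ⟨⟨haB, trivial⟩, hx⟩
        · rw [Set.indicator_of_notMem haB]
          have hemp : Prod.mk a ⁻¹' ((B ×ˢ Set.univ) ∩ C2) =
              (∅ : Set (EuclideanSpace ℝ (Fin d))) := by
            ext x
            constructor
            · rintro ⟨⟨h1, _⟩, _⟩; exact absurd h1 haB
            · rintro ⟨⟩
          rw [hemp, measure_empty]
      have hLHS : ∫ ω in A ⁻¹' B, G (A ω) ∂P
          = Mf * (∫⁻ a in B, μX (Prod.mk a ⁻¹' C2) ∂μA).toReal := by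
        rw [← setIntegral_map hB hGmeas.aestronglyMeasurable hA.aemeasurable]
        simp only [hGdef]
        rw [integral_const_mul]
        congr 1
        exact integral_toReal (hmeasG0.aemeasurable.restrict)
          (ae_of_all _ fun a => measure_lt_top μX _)
      have hRHS : ∫ ω in A ⁻¹' B, H ω ∂P
          = Mf * (∫⁻ a in B, μX (Prod.mk a ⁻¹' C2) ∂μA).toReal := by
        rw [hHdef, setIntegral_indicator hS, setIntegral_const, measureReal_def, hset,
          ← Measure.map_apply (hA.prodMk hX) hD, hmap, Measure.prod_apply hD, hsec,
          lintegral_indicator hB]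
        rw [smul_eq_mul, mul_comm]
      rw [hLHS, hRHS]
    · refine StronglyMeasurable.aestronglyMeasurable ?_
      refine Measurable.stronglyMeasurable ?_
      exact hGmeas.comp (Measurable.of_comap_le le_rfl)
  -- pointwise bound on G
  have h3 : ∀ a : EuclideanSpace ℝ (Fin d) →L[ℝ] EuclideanSpace ℝ (Fin d),
      t ^ α * L t * G a ≤ g a := by
    intro a
    by_cases ha : ‖a‖ = 0
    · have hempty : {x : EuclideanSpace ℝ (Fin d) | t * η < ‖a‖ * ‖x‖} = ∅ := by
        ext x
        constructor
        · intro hx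
          rw [Set.mem_setOf_eq, ha, zero_mul] at hx
          exact absurd hx (not_lt.mpr (by positivity))
        · rintro ⟨⟩
      have hGa : G a = 0 := by
        rw [hGdef]
        show Mf * (μX {x | t * η < ‖a‖ * ‖x‖}).toReal = 0
        rw [hempty, measure_empty, ENNReal.toReal_zero, mul_zero]
      rw [hGa, mul_zero]
      rw [hgdef]; positivity
    · have ha' : 0 < ‖a‖ := lt_of_le_of_ne (norm_nonneg a) (Ne.symm ha)
      obtain ⟨n, hn1, hn2⟩ := breiman_exists_pow ‖a‖
      have h2n : (0:ℝ) < (2:ℝ) ^ n := by positivity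
      have hsub : {x : EuclideanSpace ℝ (Fin d) | t * η < ‖a‖ * ‖x‖} ⊆
          {x : EuclideanSpace ℝ (Fin d) | ((2:ℝ) ^ n)⁻¹ * η * t < ‖x‖} := by
        intro x hx
        rw [Set.mem_setOf_eq] at hx ⊢
        have hx2 : t * η < 2 ^ n * ‖x‖ :=
          lt_of_lt_of_le hx (mul_le_mul_of_nonneg_right hn1 (norm_nonneg x))
        rw [mul_assoc, inv_mul_lt_iff₀ h2n]
        linarith
      have hmeasset : MeasurableSet
          {x : EuclideanSpace ℝ (Fin d) | ((2:ℝ) ^ n)⁻¹ * η * t < ‖x‖} :=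
        measurable_norm measurableSet_Ioi
      have hμX : μX {x : EuclideanSpace ℝ (Fin d) | ((2:ℝ) ^ n)⁻¹ * η * t < ‖x‖}
          = P {ω | ((2:ℝ) ^ n)⁻¹ * η * t < ‖X ω‖} := by
        rw [hμXdef, Measure.map_apply hX hmeasset]
        rfl
      have hμ : (μX {x | t * η < ‖a‖ * ‖x‖}).toReal ≤ p (((2:ℝ) ^ n)⁻¹ * η * t) := by
        refine ENNReal.toReal_mono (measure_ne_top P _) ?_
        exact le_of_le_of_eq (measure_mono hsub) hμX
      have hρn : ((2:ℝ) ^ (α + δ)) ^ n ≤ (2 * max ‖a‖ 1) ^ (α + δ) := by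
        have he : ((2:ℝ) ^ (α + δ)) ^ n = ((2:ℝ) ^ n : ℝ) ^ (α + δ) := by
          rw [← Real.rpow_natCast ((2:ℝ) ^ (α + δ)) n, ← Real.rpow_natCast (2:ℝ) n,
            ← Real.rpow_mul (by norm_num), ← Real.rpow_mul (by norm_num), mul_comm]
        rw [he]
        exact Real.rpow_le_rpow (by positivity) hn2 hαδ0
      calc t ^ α * L t * G a = Mf * (t ^ α * L t * (μX {x | t * η < ‖a‖ * ‖x‖}).toReal) := by
            rw [hGdef]; ring
        _ ≤ Mf * (t ^ α * L t * p (((2:ℝ) ^ n)⁻¹ * η * t)) :=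
            mul_le_mul_of_nonneg_left (mul_le_mul_of_nonneg_left hμ htL) hMf0
        _ ≤ Mf * (C * ((2:ℝ) ^ (α + δ)) ^ n) :=
            mul_le_mul_of_nonneg_left (hkey n t ht) hMf0
        _ ≤ Mf * (C * (2 * max ‖a‖ 1) ^ (α + δ)) :=
            mul_le_mul_of_nonneg_left (mul_le_mul_of_nonneg_left hρn hC0) hMf0
        _ = g a := by rw [hgdef]; ring
  -- conclusion
  filter_upwards [h1, h2] with ω hω1 hω2
  calc t ^ α * L t *
      (P[(fun ω' => f (t⁻¹ • (A ω') (X ω'))) | MeasurableSpace.comap A inferInstance]) ω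
      ≤ t ^ α * L t * (P[H | MeasurableSpace.comap A inferInstance]) ω :=
        mul_le_mul_of_nonneg_left hω1 htL
    _ = t ^ α * L t * G (A ω) := by rw [hω2]
    _ ≤ g (A ω) := h3 (A ω)
end
end

section
/- (Hölder-type bound on the truncated first moment.) Let $\nu$ be a probability measure on $\mathbb{R}^d$ whose tail is regularly varying with index $1$: $\sup_{t>0}t\,L_b(t)\,\nu(\{|x|>t\})<\infty$ for a slowly varying $L_b$ bounded away from zero and infinity on compacts, and let $\xi(t)=\int_{\mathbb{R}^d}\frac{tx}{1+|tx|^2}\,\nu(dx)$. Then for every $0<\delta<1$ there is $C_{\delta}<\infty$ such that $|\xi(t)|\le C_{\delta}|t|^{\delta}$ for all $|t|\le1$. -/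
open MeasureTheory Filter Topology

noncomputable section

private lemma aux_min_sum (K : ℕ) (y : ℝ) :
    min y ((2:ℝ)^K) ≤ 1 + ∑ k ∈ Finset.range K, (if (2:ℝ)^k < y then (2:ℝ)^k else 0) := by
  induction K with
  | zero => simpa using min_le_right y 1
  | succ K ih =>
    rw [Finset.sum_range_succ]
    by_cases h : (2:ℝ)^K < y
    · rw [if_pos h]
      have h1 : (2:ℝ)^K ≤ 1 + ∑ k ∈ Finset.range K, (if (2:ℝ)^k < y then (2:ℝ)^k else 0) := by
        calc (2:ℝ)^K = min y ((2:ℝ)^K) := (min_eq_right h.le).symm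
          _ ≤ _ := ih
      have h2 : min y ((2:ℝ)^(K+1)) ≤ (2:ℝ)^(K+1) := min_le_right _ _
      have h3 : (2:ℝ)^(K+1) = (2:ℝ)^K + (2:ℝ)^K := by ring
      linarith
    · rw [if_neg h]
      push_neg at h
      have h2 : min y ((2:ℝ)^(K+1)) ≤ y := min_le_left _ _
      have h3 : y = min y ((2:ℝ)^K) := (min_eq_left h).symm
      linarith [ih, h3 ▸ h2]

set_option maxHeartbeats 1000000 in
/-- Hölder-type bound on the truncated first moment: if the
tail of `ν` is regularly varying of index `1`, i.e.
`sup_{t>0} t L_b(t) ν({|x|>t}) < ∞`, and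
`ξ(t) = ∫ t x / (1+|t x|²) ν(dx)`, then for every `0 < δ < 1` there is
`C_δ < ∞` with `|ξ(t)| ≤ C_δ |t|^δ` for all `|t| ≤ 1`. -/
theorem truncated_first_moment_bound
    {d : ℕ} (ν : Measure (EuclideanSpace ℝ (Fin d))) [IsProbabilityMeasure ν]
    (L : ℝ → ℝ)
    (hLpos : ∀ t : ℝ, 0 < t → 0 < L t)
    (hLslow : ∀ l : ℝ, 0 < l →
      Tendsto (fun t => L (l * t) / L t) atTop (𝓝 1))
    (hLbdd : ∀ a b : ℝ, 0 < a →
      ∃ m M : ℝ, 0 < m ∧ ∀ t ∈ Set.Icc a b, m ≤ L t ∧ L t ≤ M)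
    (htail : ∃ M : ℝ, ∀ t : ℝ, 0 < t →
      t * L t * (ν {x | t < ‖x‖}).toReal ≤ M) :
    ∀ δ : ℝ, 0 < δ → δ < 1 →
      ∃ C : ℝ, ∀ t : ℝ, |t| ≤ 1 →
        ‖∫ x, (t / (1 + ‖t • x‖ ^ 2)) • x ∂ν‖ ≤ C * |t| ^ δ := by
  intro δ hδ0 hδ1
  set a : ℝ := 1 - δ with ha_def
  have ha0 : 0 < a := by simp [ha_def]; linarith
  obtain ⟨M, hM⟩ := htail
  have hM0 : 0 ≤ M := by
    refine le_trans ?_ (hM 1 one_pos)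
    have := hLpos 1 one_pos
    positivity
  -- dyadic lower bound on L : ∃ c > 0, ∀ k, c * 2^(-(a*k)) ≤ L (2^k)
  have hLlow : ∃ c : ℝ, 0 < c ∧ ∀ k : ℕ, c * (2:ℝ)^(-(a*(k:ℝ))) ≤ L ((2:ℝ)^k) := by
    have h2 := hLslow 2 two_pos
    have hlt : (2:ℝ)^(-a) < 1 := Real.rpow_lt_one_of_one_lt_of_neg one_lt_two (by linarith)
    have hev : ∀ᶠ u in atTop, (2:ℝ)^(-a) < L (2*u) / L u := h2.eventually (eventually_gt_nhds hlt)
    obtain ⟨T0, hT0⟩ := eventually_atTop.mp hev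
    set T : ℝ := max T0 1 with hT_def
    obtain ⟨N, hN⟩ := pow_unbounded_of_one_lt T (one_lt_two (α := ℝ))
    obtain ⟨m, M', hm0, hmm⟩ := hLbdd 1 ((2:ℝ)^N) one_pos
    have hstep : ∀ u : ℝ, T ≤ u → (2:ℝ)^(-a) * L u ≤ L (2*u) := by
      intro u hu
      have hu0 : 0 < u := lt_of_lt_of_le one_pos ((le_max_right T0 1).trans hu)
      have hL := hT0 u ((le_max_left T0 1).trans hu)
      exact ((lt_div_iff₀ (hLpos u hu0)).mp hL).le
    have hdy : ∀ j : ℕ, (2:ℝ)^(-(a*(j:ℝ))) * L ((2:ℝ)^N) ≤ L ((2:ℝ)^(N+j)) := by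
      intro j
      induction j with
      | zero => simp
      | succ j ih =>
        have harg : T ≤ (2:ℝ)^(N+j) :=
          hN.le.trans (pow_le_pow_right₀ one_le_two (Nat.le_add_right _ _))
        have h1 := hstep _ harg
        have h2 : (2:ℝ)^(N+(j+1)) = 2 * (2:ℝ)^(N+j) := by ring
        rw [h2]
        have h3 : (2:ℝ)^(-(a*((j:ℝ)+1))) * L ((2:ℝ)^N)
            = (2:ℝ)^(-a) * ((2:ℝ)^(-(a*(j:ℝ))) * L ((2:ℝ)^N)) := by
          rw [← mul_assoc, ← Real.rpow_add two_pos]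
          ring_nf
        push_cast
        rw [h3]
        calc (2:ℝ)^(-a) * ((2:ℝ)^(-(a*(j:ℝ))) * L ((2:ℝ)^N))
            ≤ (2:ℝ)^(-a) * L ((2:ℝ)^(N+j)) := by
              exact mul_le_mul_of_nonneg_left ih (Real.rpow_nonneg two_pos.le _)
          _ ≤ L (2 * (2:ℝ)^(N+j)) := h1
    refine ⟨min m (L ((2:ℝ)^N)), lt_min hm0 (hLpos _ (by positivity)), ?_⟩
    intro k
    rcases le_or_gt k N with hk | hk
    · have hmem : (2:ℝ)^k ∈ Set.Icc 1 ((2:ℝ)^N) :=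
        ⟨one_le_pow₀ one_le_two, pow_le_pow_right₀ one_le_two hk⟩
      have hLk := (hmm _ hmem).1
      have h1 : (2:ℝ)^(-(a*(k:ℝ))) ≤ 1 :=
        Real.rpow_le_one_of_one_le_of_nonpos one_le_two (neg_nonpos.mpr (by positivity))
      have hcpos : (0:ℝ) < min m (L ((2:ℝ)^N)) := lt_min hm0 (hLpos _ (by positivity))
      calc min m (L ((2:ℝ)^N)) * (2:ℝ)^(-(a*(k:ℝ))) ≤ min m (L ((2:ℝ)^N)) * 1 :=
            mul_le_mul_of_nonneg_left h1 hcpos.le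
        _ ≤ m := by rw [mul_one]; exact min_le_left _ _
        _ ≤ L ((2:ℝ)^k) := hLk
    · have hkN : N + (k - N) = k := Nat.add_sub_cancel' hk.le
      have hj := hdy (k - N)
      rw [hkN] at hj
      have hcast : ((k - N : ℕ) : ℝ) = (k:ℝ) - (N:ℝ) := by
        push_cast [Nat.cast_sub hk.le]; ring
      have hexp : (2:ℝ)^(-(a*(k:ℝ))) ≤ (2:ℝ)^(-(a*(((k - N : ℕ)):ℝ))) := by
        apply Real.rpow_le_rpow_of_exponent_le one_le_two
        rw [hcast]
        have : 0 ≤ a * (N:ℝ) := by positivity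
        nlinarith
      calc min m (L ((2:ℝ)^N)) * (2:ℝ)^(-(a*(k:ℝ)))
          ≤ L ((2:ℝ)^N) * (2:ℝ)^(-(a*(((k - N : ℕ)):ℝ))) := by
            apply mul_le_mul (min_le_right _ _) hexp (Real.rpow_nonneg two_pos.le _)
              (hLpos _ (by positivity)).le
        _ = (2:ℝ)^(-(a*(((k - N : ℕ)):ℝ))) * L ((2:ℝ)^N) := by ring
        _ ≤ L ((2:ℝ)^k) := hj
  obtain ⟨c, hc0, hclow⟩ := hLlow
  -- tail bound at dyadic points
  have htailk : ∀ k : ℕ, (ν {x | (2:ℝ)^k < ‖x‖}).toReal ≤ (M/c) * (2:ℝ)^(-(δ*(k:ℝ))) := by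
    intro k
    have hk0 : (0:ℝ) < 2^k := by positivity
    have h1 := hM ((2:ℝ)^k) hk0
    set τ := (ν {x | (2:ℝ)^k < ‖x‖}).toReal with hτ
    have hτ0 : 0 ≤ τ := ENNReal.toReal_nonneg
    have hprod : c * (2:ℝ)^(δ*(k:ℝ)) ≤ (2:ℝ)^k * L ((2:ℝ)^k) := by
      have h2 := hclow k
      have h3 : (2:ℝ)^k * (c * (2:ℝ)^(-(a*(k:ℝ)))) = c * (2:ℝ)^(δ*(k:ℝ)) := by
        rw [← Real.rpow_natCast (2:ℝ) k,
          show (2:ℝ)^((k:ℝ)) * (c * (2:ℝ)^(-(a*(k:ℝ)))) = c * ((2:ℝ)^((k:ℝ)) * (2:ℝ)^(-(a*(k:ℝ)))) from by ring,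
          ← Real.rpow_add two_pos]
        rw [ha_def]; ring_nf
      calc c * (2:ℝ)^(δ*(k:ℝ)) = (2:ℝ)^k * (c * (2:ℝ)^(-(a*(k:ℝ)))) := h3.symm
        _ ≤ (2:ℝ)^k * L ((2:ℝ)^k) := mul_le_mul_of_nonneg_left h2 hk0.le
    have hpos2 : (0:ℝ) < c * (2:ℝ)^(δ*(k:ℝ)) := by positivity
    have hpos3 : (0:ℝ) < (2:ℝ)^k * L ((2:ℝ)^k) := mul_pos hk0 (hLpos _ hk0)
    have hstep1 : τ ≤ M / ((2:ℝ)^k * L ((2:ℝ)^k)) := by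
      rw [le_div_iff₀ hpos3]
      calc τ * ((2:ℝ)^k * L ((2:ℝ)^k)) = (2:ℝ)^k * L ((2:ℝ)^k) * τ := by ring
        _ ≤ M := h1
    have hstep2 : M / ((2:ℝ)^k * L ((2:ℝ)^k)) ≤ M / (c * (2:ℝ)^(δ*(k:ℝ))) :=
      div_le_div_of_nonneg_left hM0 hpos2 hprod
    have hstep3 : M / (c * (2:ℝ)^(δ*(k:ℝ))) = (M/c) * (2:ℝ)^(-(δ*(k:ℝ))) := by
      rw [Real.rpow_neg two_pos.le]
      have hx : ((2:ℝ)^(δ*(k:ℝ))) ≠ 0 := by positivity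
      field_simp
    linarith
  -- constants
  set r : ℝ := (2:ℝ)^(a:ℝ) with hr_def
  have hr1 : 1 < r := by
    rw [hr_def]
    have := Real.rpow_natCast (2:ℝ) 1
    calc (1:ℝ) = (2:ℝ)^(0:ℝ) := (Real.rpow_zero 2).symm
      _ < (2:ℝ)^(a:ℝ) := Real.rpow_lt_rpow_of_exponent_lt one_lt_two ha0
  have hC0 : 0 ≤ M / c := div_nonneg hM0 hc0.le
  refine ⟨1 + (M/c) * r / (r - 1), ?_⟩
  intro t ht
  by_cases ht0 : t = 0
  · subst ht0
    simp [Real.zero_rpow hδ0.ne']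
  -- main case
  set s := |t| with hs_def
  have hs0 : 0 < s := abs_pos.mpr ht0
  have hs1 : s ≤ 1 := ht
  set K := ⌈Real.logb 2 s⁻¹⌉₊ with hK_def
  have hinv1 : 1 ≤ s⁻¹ := one_le_inv_iff₀.mpr ⟨hs0, hs1⟩
  have hlogb0 : 0 ≤ Real.logb 2 s⁻¹ := Real.logb_nonneg one_lt_two hinv1
  have hKlow : s⁻¹ ≤ (2:ℝ)^K := by
    have h1 : s⁻¹ = (2:ℝ) ^ (Real.logb 2 s⁻¹) :=
      (Real.rpow_logb two_pos (by norm_num) (by positivity)).symm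
    rw [h1, ← Real.rpow_natCast 2 K]
    exact Real.rpow_le_rpow_of_exponent_le one_le_two (Nat.le_ceil _)
  have hKup : ((2:ℝ)^K) ≤ 2 / s := by
    have h2 : ((K:ℝ)) ≤ Real.logb 2 s⁻¹ + 1 := (Nat.ceil_lt_add_one hlogb0).le
    have h3 : (2:ℝ)^(K:ℝ) ≤ (2:ℝ)^(Real.logb 2 s⁻¹ + 1) :=
      Real.rpow_le_rpow_of_exponent_le one_le_two h2
    rw [Real.rpow_add two_pos, Real.rpow_logb two_pos (by norm_num) (by positivity),
      Real.rpow_one] at h3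
    rw [← Real.rpow_natCast 2 K]
    calc (2:ℝ)^(K:ℝ) ≤ s⁻¹ * 2 := h3
      _ = 2 / s := by rw [div_eq_mul_inv]; ring
  have hsK : 1 ≤ s * (2:ℝ)^K := by
    calc (1:ℝ) = s * s⁻¹ := (mul_inv_cancel₀ hs0.ne').symm
      _ ≤ s * (2:ℝ)^K := mul_le_mul_of_nonneg_left hKlow hs0.le
  -- pointwise bound
  have hDpos : ∀ x : EuclideanSpace ℝ (Fin d), 0 < 1 + ‖t • x‖^2 := fun x => by positivity
  have hnormF : ∀ x : EuclideanSpace ℝ (Fin d),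
      ‖(t / (1 + ‖t • x‖ ^ 2)) • x‖ = s * ‖x‖ / (1 + ‖t • x‖^2) := by
    intro x
    rw [norm_smul, Real.norm_eq_abs, abs_div, abs_of_pos (hDpos x)]
    rw [hs_def]; ring
  have hFbound : ∀ x : EuclideanSpace ℝ (Fin d),
      ‖(t / (1 + ‖t • x‖ ^ 2)) • x‖ ≤ s * min ‖x‖ ((2:ℝ)^K) := by
    intro x
    rw [hnormF x]
    have hTx : ‖t • x‖ = s * ‖x‖ := by rw [norm_smul, Real.norm_eq_abs, hs_def]
    rcases le_total ‖x‖ ((2:ℝ)^K) with h | h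
    · rw [min_eq_left h]
      exact div_le_self (by positivity) (by nlinarith [sq_nonneg ‖t • x‖])
    · rw [min_eq_right h]
      have h1 : s * ‖x‖ / (1 + ‖t • x‖^2) ≤ 1 := by
        rw [div_le_one (hDpos x), hTx]
        nlinarith [sq_nonneg (s * ‖x‖ - 1)]
      calc s * ‖x‖ / (1 + ‖t • x‖^2) ≤ 1 := h1
        _ ≤ s * (2:ℝ)^K := hsK
  -- integrability
  have hcontD : Continuous fun x : EuclideanSpace ℝ (Fin d) => 1 + ‖t • x‖ ^ 2 :=
    continuous_const.add ((continuous_id.const_smul t).norm.pow 2)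
  have hcontF : Continuous fun x : EuclideanSpace ℝ (Fin d) => (t / (1 + ‖t • x‖ ^ 2)) • x :=
    Continuous.smul (continuous_const.div hcontD fun x => (hDpos x).ne') continuous_id
  have hFint : Integrable (fun x => (t / (1 + ‖t • x‖ ^ 2)) • x) ν :=
    Integrable.mono' (integrable_const (s * (2:ℝ)^K)) hcontF.aestronglyMeasurable
      (ae_of_all _ fun x => (hFbound x).trans
        (mul_le_mul_of_nonneg_left (min_le_right _ _) hs0.le))
  have hminnn : ∀ x : EuclideanSpace ℝ (Fin d), 0 ≤ min ‖x‖ ((2:ℝ)^K) :=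
    fun x => le_min (norm_nonneg x) (by positivity)
  have hmincont : Continuous fun x : EuclideanSpace ℝ (Fin d) => min ‖x‖ ((2:ℝ)^K) :=
    continuous_norm.min continuous_const
  have hminint : Integrable (fun x : EuclideanSpace ℝ (Fin d) => min ‖x‖ ((2:ℝ)^K)) ν :=
    Integrable.mono' (integrable_const ((2:ℝ)^K)) hmincont.aestronglyMeasurable
      (ae_of_all _ fun x => by
        rw [Real.norm_eq_abs, abs_of_nonneg (hminnn x)]
        exact min_le_right _ _)
  have hgint : Integrable (fun x : EuclideanSpace ℝ (Fin d) => s * min ‖x‖ ((2:ℝ)^K)) ν :=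
    hminint.const_mul s
  have hsetmeas : ∀ k : ℕ, MeasurableSet {x : EuclideanSpace ℝ (Fin d) | (2:ℝ)^k < ‖x‖} :=
    fun k => measurableSet_lt measurable_const measurable_norm
  have hhint : Integrable (fun x : EuclideanSpace ℝ (Fin d) =>
      1 + ∑ k ∈ Finset.range K,
        Set.indicator {y : EuclideanSpace ℝ (Fin d) | (2:ℝ)^k < ‖y‖} (fun _ => (2:ℝ)^k) x) ν :=
    (integrable_const 1).add
      (integrable_finset_sum _ fun k _ => (integrable_const _).indicator (hsetmeas k))
  have hmono2 : ∀ x : EuclideanSpace ℝ (Fin d), min ‖x‖ ((2:ℝ)^K) ≤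
      1 + ∑ k ∈ Finset.range K,
        Set.indicator {y : EuclideanSpace ℝ (Fin d) | (2:ℝ)^k < ‖y‖} (fun _ => (2:ℝ)^k) x := by
    intro x
    refine (aux_min_sum K ‖x‖).trans (le_of_eq ?_)
    simp [Set.indicator_apply]
  -- integral chain
  have hτ : ∀ k : ℕ, ∫ x, Set.indicator
      {y : EuclideanSpace ℝ (Fin d) | (2:ℝ)^k < ‖y‖} (fun _ => (2:ℝ)^k) x ∂ν
      = (ν {y : EuclideanSpace ℝ (Fin d) | (2:ℝ)^k < ‖y‖}).toReal * (2:ℝ)^k := by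
    intro k
    rw [integral_indicator_const ((2:ℝ)^k) (hsetmeas k), smul_eq_mul]
    rfl
  have hchain1 : ‖∫ x, (t / (1 + ‖t • x‖ ^ 2)) • x ∂ν‖ ≤
      s * (1 + ∑ k ∈ Finset.range K,
        (ν {y : EuclideanSpace ℝ (Fin d) | (2:ℝ)^k < ‖y‖}).toReal * (2:ℝ)^k) := by
    calc ‖∫ x, (t / (1 + ‖t • x‖ ^ 2)) • x ∂ν‖
        ≤ ∫ x, ‖(t / (1 + ‖t • x‖ ^ 2)) • x‖ ∂ν := norm_integral_le_integral_norm _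
      _ ≤ ∫ x, s * min ‖x‖ ((2:ℝ)^K) ∂ν := integral_mono hFint.norm hgint hFbound
      _ = s * ∫ x, min ‖x‖ ((2:ℝ)^K) ∂ν := integral_const_mul s _
      _ ≤ s * ∫ x, (1 + ∑ k ∈ Finset.range K,
            Set.indicator {y : EuclideanSpace ℝ (Fin d) | (2:ℝ)^k < ‖y‖}
              (fun _ => (2:ℝ)^k) x) ∂ν :=
          mul_le_mul_of_nonneg_left (integral_mono hminint hhint hmono2) hs0.le
      _ = s * (1 + ∑ k ∈ Finset.range K,
            (ν {y : EuclideanSpace ℝ (Fin d) | (2:ℝ)^k < ‖y‖}).toReal * (2:ℝ)^k) := by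
          rw [integral_add (integrable_const 1)
            (integrable_finset_sum _ fun k _ => (integrable_const _).indicator (hsetmeas k)),
            integral_const, integral_finset_sum _
              (fun k _ => (integrable_const _).indicator (hsetmeas k))]
          simp only [Measure.real, measure_univ, ENNReal.toReal_one, smul_eq_mul, mul_one]
          simp only [hτ]
  -- numeric estimate of the sum
  have hterm : ∀ k ∈ Finset.range K,
      (ν {y : EuclideanSpace ℝ (Fin d) | (2:ℝ)^k < ‖y‖}).toReal * (2:ℝ)^k ≤ (M/c) * r^k := by
    intro k _
    have h1 := htailk k
    have h2 : (0:ℝ) ≤ (2:ℝ)^k := by positivity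
    calc (ν {y : EuclideanSpace ℝ (Fin d) | (2:ℝ)^k < ‖y‖}).toReal * (2:ℝ)^k
        ≤ ((M/c) * (2:ℝ)^(-(δ*(k:ℝ)))) * (2:ℝ)^k := mul_le_mul_of_nonneg_right h1 h2
      _ = (M/c) * r^k := by
          rw [mul_assoc, ← Real.rpow_natCast (2:ℝ) k, ← Real.rpow_add two_pos,
            hr_def, ← Real.rpow_natCast ((2:ℝ)^(a:ℝ)) k, ← Real.rpow_mul two_pos.le]
          congr 2
          rw [ha_def]; ring
  have hsum : ∑ k ∈ Finset.range K,
      (ν {y : EuclideanSpace ℝ (Fin d) | (2:ℝ)^k < ‖y‖}).toReal * (2:ℝ)^k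
      ≤ (M/c) * (r^K / (r-1)) := by
    calc ∑ k ∈ Finset.range K,
        (ν {y : EuclideanSpace ℝ (Fin d) | (2:ℝ)^k < ‖y‖}).toReal * (2:ℝ)^k
        ≤ ∑ k ∈ Finset.range K, (M/c) * r^k := Finset.sum_le_sum hterm
      _ = (M/c) * ((r^K - 1)/(r-1)) := by rw [← Finset.mul_sum, geom_sum_eq hr1.ne']
      _ ≤ (M/c) * (r^K / (r-1)) := by
          have h9 : (r^K - 1)/(r-1) ≤ r^K/(r-1) := by
            have hr0 : (0:ℝ) < r - 1 := by linarith
            gcongr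
            linarith
          exact mul_le_mul_of_nonneg_left h9 hC0
  -- r^K ≤ r * s^(δ-1) in suitable form : s * r^K ≤ r * s^δ
  have hrK : s * r^K ≤ r * s^δ := by
    have h1 : r^K = ((2:ℝ)^K)^(a:ℝ) := by
      rw [hr_def, ← Real.rpow_natCast ((2:ℝ)^(a:ℝ)) K, ← Real.rpow_mul two_pos.le,
        mul_comm, Real.rpow_mul two_pos.le, Real.rpow_natCast]
    have h2 : ((2:ℝ)^K)^(a:ℝ) ≤ (2/s)^(a:ℝ) :=
      Real.rpow_le_rpow (by positivity) hKup ha0.le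
    have h3 : (2/s)^(a:ℝ) = (2:ℝ)^(a:ℝ) / s^(a:ℝ) := Real.div_rpow two_pos.le hs0.le _
    have h4 : s * ((2:ℝ)^(a:ℝ) / s^(a:ℝ)) = r * s^δ := by
      have h5 : s^δ = s / s^(a:ℝ) := by
        rw [show δ = 1 - a by rw [ha_def]; ring, Real.rpow_sub hs0, Real.rpow_one]
      rw [hr_def, h5]; ring
    calc s * r^K = s * ((2:ℝ)^K)^(a:ℝ) := by rw [h1]
      _ ≤ s * (2/s)^(a:ℝ) := mul_le_mul_of_nonneg_left h2 hs0.le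
      _ = r * s^δ := by rw [h3, h4]
  -- finish
  have hsδ : s ≤ s^δ := by
    calc s = s^(1:ℝ) := (Real.rpow_one s).symm
      _ ≤ s^δ := Real.rpow_le_rpow_of_exponent_ge hs0 hs1 hδ1.le
  have hsδ0 : 0 ≤ s^δ := Real.rpow_nonneg hs0.le δ
  have hrpos : 0 < r - 1 := by linarith
  calc ‖∫ x, (t / (1 + ‖t • x‖ ^ 2)) • x ∂ν‖
      ≤ s * (1 + ∑ k ∈ Finset.range K,
          (ν {y : EuclideanSpace ℝ (Fin d) | (2:ℝ)^k < ‖y‖}).toReal * (2:ℝ)^k) := hchain1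
    _ ≤ s * (1 + (M/c) * (r^K / (r-1))) := by
        apply mul_le_mul_of_nonneg_left _ hs0.le
        linarith [hsum]
    _ = s + (M/c) / (r-1) * (s * r^K) := by ring
    _ ≤ s^δ + (M/c) / (r-1) * (r * s^δ) := by
        have hcoef : 0 ≤ (M/c) / (r-1) := div_nonneg hC0 hrpos.le
        have := mul_le_mul_of_nonneg_left hrK hcoef
        linarith
    _ = (1 + (M/c) * r / (r - 1)) * s^δ := by ring
end
end
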